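/- arXiv:2301.05512 — 6 statements merged into one kernel-verified Lean document; each statement's English description precedes it below -/
import Mathlib

section
/- For two probability measures μ and ν on the real line with finite first moments, the Kantorovich (Wasserstein-1) distance satisfies W₁(μ, ν) = ∫_ℝ |F_μ(x) − F_ν(x)| dx, where F_μ and F_ν are the cumulative distribution functions of μ and ν. -/
open MeasureTheory ProbabilityTheory Set Filter

/-- The Kantorovich (Wasserstein-1) distance between two measures on `ℝ`,
defined as the infimum over couplings of the expected distance. -/
noncomputable def W1 (μ ν : Measure ℝ) : ℝ :=
  ⨅ π : {π : Measure (ℝ × ℝ) // π.map Prod.fst = μ ∧ π.map Prod.snd = ν},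
    ∫ p, |p.1 - p.2| ∂(π : Measure (ℝ × ℝ))

namespace KantorovichAux

/-! ### The quantile function -/

/-- Quantile function of a measure. -/
noncomputable def Q (μ : Measure ℝ) : ℝ → ℝ := fun u => sInf {x | u ≤ cdf μ x}

variable {μ ν : Measure ℝ} [IsProbabilityMeasure μ] [IsProbabilityMeasure ν]

lemma S_nonempty {u : ℝ} (hu : u < 1) : {x | u ≤ cdf μ x}.Nonempty := by
  obtain ⟨x, hx⟩ := (Filter.Tendsto.eventually_const_le hu (tendsto_cdf_atTop μ)).exists
  exact ⟨x, hx⟩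

lemma S_bddBelow {u : ℝ} (hu : 0 < u) : BddBelow {x | u ≤ cdf μ x} := by
  obtain ⟨M, hM⟩ := eventually_atBot.1 (Filter.Tendsto.eventually_lt_const hu (tendsto_cdf_atBot μ))
  refine ⟨M, fun x hx => ?_⟩
  by_contra hxM
  push_neg at hxM
  exact absurd hx (not_le.2 (hM x hxM.le))

lemma Q_le_iff {u t : ℝ} (hu : u ∈ Ioo (0:ℝ) 1) : Q μ u ≤ t ↔ u ≤ cdf μ t := by
  constructor
  · intro h
    by_contra hc
    push_neg at hc
    have hrc : Tendsto (cdf μ) (nhdsWithin t (Ici t)) (nhds (cdf μ t)) :=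
      (cdf μ).right_continuous t
    have hev : (cdf μ) ⁻¹' (Iio u) ∈ nhdsWithin t (Ici t) := hrc (Iio_mem_nhds hc)
    rw [mem_nhdsGE_iff_exists_Ico_subset] at hev
    obtain ⟨b, hb, hsub⟩ := hev
    have hbQ : b ≤ Q μ u := by
      apply le_csInf (S_nonempty hu.2)
      intro x hx
      have hx' : u ≤ cdf μ x := hx
      by_contra hxb
      push_neg at hxb
      rcases lt_or_ge x t with hxt | hxt
      · exact absurd hx' (not_le.2 (lt_of_le_of_lt ((monotone_cdf μ) hxt.le) hc))
      · exact absurd hx' (not_le.2 (hsub ⟨hxt, hxb⟩))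
    exact absurd (hbQ.trans h) (not_le.2 hb)
  · intro h
    exact csInf_le (S_bddBelow hu.1) h

lemma Q_monotoneOn : MonotoneOn (Q μ) (Ioo (0:ℝ) 1) := by
  intro u hu v hv huv
  exact csInf_le_csInf (S_bddBelow hu.1) (S_nonempty hv.2) fun x hx => huv.trans hx

lemma Q_aemeasurable : AEMeasurable (Q μ) (volume.restrict (Ioo (0:ℝ) 1)) :=
  aemeasurable_restrict_of_monotoneOn measurableSet_Ioo Q_monotoneOn

lemma vol_Ioo_inter_Iic {c : ℝ} (h0 : 0 ≤ c) (h1 : c ≤ 1) :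
    volume (Ioo (0:ℝ) 1 ∩ Iic c) = ENNReal.ofReal c := by
  apply le_antisymm
  · calc volume (Ioo (0:ℝ) 1 ∩ Iic c) ≤ volume (Ioc (0:ℝ) c) :=
        measure_mono fun x hx => ⟨hx.1.1, hx.2⟩
      _ = ENNReal.ofReal c := by simp
  · calc ENNReal.ofReal c = volume (Ioo (0:ℝ) c) := by simp
      _ ≤ volume (Ioo (0:ℝ) 1 ∩ Iic c) :=
        measure_mono fun x hx => ⟨⟨hx.1, lt_of_lt_of_le hx.2 h1⟩, hx.2.le⟩

lemma isProbRestrict : IsProbabilityMeasure (volume.restrict (Ioo (0:ℝ) 1)) :=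
  ⟨by simp⟩

lemma map_Q : Measure.map (Q μ) (volume.restrict (Ioo (0:ℝ) 1)) = μ := by
  have hP := @isProbRestrict
  have hm := Measure.isProbabilityMeasure_map (Q_aemeasurable (μ := μ))
  refine Measure.ext_of_Iic _ μ fun t => ?_
  rw [Measure.map_apply_of_aemeasurable Q_aemeasurable measurableSet_Iic,
    Measure.restrict_apply₀' measurableSet_Ioo.nullMeasurableSet]
  have hset : Q μ ⁻¹' Iic t ∩ Ioo (0:ℝ) 1 = Ioo (0:ℝ) 1 ∩ Iic (cdf μ t) := by
    ext u
    constructor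
    · rintro ⟨hQu, hu⟩
      exact ⟨hu, (Q_le_iff hu).1 hQu⟩
    · rintro ⟨hu, hc⟩
      exact ⟨(Q_le_iff hu).2 hc, hu⟩
  rw [hset, vol_Ioo_inter_Iic (cdf_nonneg μ t) (cdf_le_one μ t), ofReal_cdf]

/-! ### The layer-cake kernel -/

/-- The "disagreement" set at level `t`. -/
def E (t : ℝ) : Set (ℝ × ℝ) :=
  ({p : ℝ × ℝ | p.1 ≤ t} \ {p : ℝ × ℝ | p.2 ≤ t}) ∪
    ({p : ℝ × ℝ | p.2 ≤ t} \ {p : ℝ × ℝ | p.1 ≤ t})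

lemma mem_E {t : ℝ} {p : ℝ × ℝ} :
    p ∈ E t ↔ (p.1 ≤ t ∧ ¬ p.2 ≤ t) ∨ (p.2 ≤ t ∧ ¬ p.1 ≤ t) := by
  simp [E, mem_union, mem_diff, mem_setOf_eq]

lemma E_measurable (t : ℝ) : MeasurableSet (E t) := by
  have h1 : MeasurableSet {p : ℝ × ℝ | p.1 ≤ t} :=
    measurableSet_le measurable_fst measurable_const
  have h2 : MeasurableSet {p : ℝ × ℝ | p.2 ≤ t} :=
    measurableSet_le measurable_snd measurable_const
  exact (h1.diff h2).union (h2.diff h1)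

/-- Kernel. -/
noncomputable def g (p : ℝ × ℝ) (t : ℝ) : ENNReal := (E t).indicator 1 p

lemma g_uncurry_measurable : Measurable (Function.uncurry g) := by
  have : Function.uncurry g = Set.indicator
      ((({q : (ℝ × ℝ) × ℝ | q.1.1 ≤ q.2} \ {q | q.1.2 ≤ q.2}) ∪
        ({q : (ℝ × ℝ) × ℝ | q.1.2 ≤ q.2} \ {q | q.1.1 ≤ q.2}))) 1 := by
    ext q
    classical
    show g q.1 q.2 = _
    rw [g, Set.indicator_apply, Set.indicator_apply]
    simp only [Pi.one_apply]
    refine if_congr ?_ rfl rfl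
    rw [mem_E]
    simp only [mem_union, mem_diff, mem_setOf_eq]
  rw [this]
  have h1 : MeasurableSet {q : (ℝ × ℝ) × ℝ | q.1.1 ≤ q.2} :=
    measurableSet_le (measurable_fst.fst) measurable_snd
  have h2 : MeasurableSet {q : (ℝ × ℝ) × ℝ | q.1.2 ≤ q.2} :=
    measurableSet_le (measurable_fst.snd) measurable_snd
  exact measurable_const.indicator ((h1.diff h2).union (h2.diff h1))

lemma lintegral_g_fiber (a b : ℝ) :
    ∫⁻ t, g (a, b) t = ENNReal.ofReal |a - b| := by
  have hset : ∀ t : ℝ, ((a, b) ∈ E t ↔ t ∈ Ico a b ∪ Ico b a) := by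
    intro t
    simp only [mem_E, mem_union, mem_Ico, not_le]
  have : (fun t => g (a, b) t) = (Ico a b ∪ Ico b a).indicator 1 := by
    ext t
    classical
    rw [g, Set.indicator_apply, Set.indicator_apply, Pi.one_apply, Pi.one_apply]
    exact if_congr (hset t) rfl rfl
  rw [this, lintegral_indicator_one (measurableSet_Ico.union measurableSet_Ico)]
  rcases le_total a b with h | h
  · rw [Ico_eq_empty (not_lt.2 h), union_empty, Real.volume_Ico, abs_sub_comm,
      abs_of_nonneg (sub_nonneg.2 h)]
  · rw [Ico_eq_empty (not_lt.2 h), empty_union, Real.volume_Ico,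
      abs_of_nonneg (sub_nonneg.2 h)]

/-- Master layer-cake formula for an arbitrary probability measure on the plane. -/
lemma cost_eq_lintegral_E (π : Measure (ℝ × ℝ)) [IsProbabilityMeasure π] :
    ∫⁻ p, ENNReal.ofReal |p.1 - p.2| ∂π = ∫⁻ t, π (E t) := by
  calc ∫⁻ p, ENNReal.ofReal |p.1 - p.2| ∂π = ∫⁻ p, ∫⁻ t, g p t ∂(volume) ∂π := by
        refine lintegral_congr fun p => ?_
        rw [lintegral_g_fiber p.1 p.2]
    _ = ∫⁻ t, ∫⁻ p, g p t ∂π ∂(volume) :=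
        lintegral_lintegral_swap g_uncurry_measurable.aemeasurable
    _ = ∫⁻ t, π (E t) := by
        refine lintegral_congr fun t => ?_
        exact lintegral_indicator_one (E_measurable t)

/-! ### Marginals -/

lemma isProbOfCoupling {π : Measure (ℝ × ℝ)} (h1 : π.map Prod.fst = μ) :
    IsProbabilityMeasure π := by
  constructor
  have : π.map Prod.fst Set.univ = π Set.univ := by
    rw [Measure.map_apply measurable_fst MeasurableSet.univ, preimage_univ]
  rw [← this, h1, measure_univ]

lemma coupling_fst {π : Measure (ℝ × ℝ)} (h1 : π.map Prod.fst = μ) (t : ℝ) :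
    π {p : ℝ × ℝ | p.1 ≤ t} = ENNReal.ofReal (cdf μ t) := by
  have : {p : ℝ × ℝ | p.1 ≤ t} = Prod.fst ⁻¹' Iic t := rfl
  rw [this, ← Measure.map_apply measurable_fst measurableSet_Iic, h1, ofReal_cdf]

lemma coupling_snd {π : Measure (ℝ × ℝ)} (h2 : π.map Prod.snd = ν) (t : ℝ) :
    π {p : ℝ × ℝ | p.2 ≤ t} = ENNReal.ofReal (cdf ν t) := by
  have : {p : ℝ × ℝ | p.2 ≤ t} = Prod.snd ⁻¹' Iic t := rfl
  rw [this, ← Measure.map_apply measurable_snd measurableSet_Iic, h2, ofReal_cdf]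

/-- Lower bound pointwise in `t`. -/
lemma lower_pointwise {π : Measure (ℝ × ℝ)} (h1 : π.map Prod.fst = μ)
    (h2 : π.map Prod.snd = ν) (t : ℝ) :
    ENNReal.ofReal |cdf μ t - cdf ν t| ≤ π (E t) := by
  set A := {p : ℝ × ℝ | p.1 ≤ t}
  set B := {p : ℝ × ℝ | p.2 ≤ t}
  have hAB : A ⊆ B ∪ E t := by
    intro p hp
    by_cases hB : p ∈ B
    · exact Or.inl hB
    · exact Or.inr (mem_E.2 (Or.inl ⟨hp, hB⟩))
  have hBA : B ⊆ A ∪ E t := by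
    intro p hp
    by_cases hA : p ∈ A
    · exact Or.inl hA
    · exact Or.inr (mem_E.2 (Or.inr ⟨hp, hA⟩))
  rcases le_total (cdf ν t) (cdf μ t) with h | h
  · rw [abs_of_nonneg (sub_nonneg.2 h), ENNReal.ofReal_sub _ (cdf_nonneg ν t),
      ← coupling_fst h1 t, ← coupling_snd h2 t]
    rw [tsub_le_iff_right]
    calc π A ≤ π (B ∪ E t) := measure_mono hAB
      _ ≤ π (E t) + π B := by
          rw [add_comm]; exact measure_union_le _ _
  · rw [abs_of_nonpos (sub_nonpos.2 h), neg_sub, ENNReal.ofReal_sub _ (cdf_nonneg μ t),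
      ← coupling_fst h1 t, ← coupling_snd h2 t]
    rw [tsub_le_iff_right]
    calc π B ≤ π (A ∪ E t) := measure_mono hBA
      _ ≤ π (E t) + π A := by
          rw [add_comm]; exact measure_union_le _ _

/-! ### The quantile coupling -/

/-- Quantile coupling. -/
noncomputable def qc (μ ν : Measure ℝ) : Measure (ℝ × ℝ) :=
  Measure.map (fun u => (Q μ u, Q ν u)) (volume.restrict (Ioo (0:ℝ) 1))

lemma qc_aemeasurable : AEMeasurable (fun u => (Q μ u, Q ν u))
    (volume.restrict (Ioo (0:ℝ) 1)) :=
  Q_aemeasurable.prodMk Q_aemeasurable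

lemma qc_fst : (qc μ ν).map Prod.fst = μ := by
  rw [qc, AEMeasurable.map_map_of_aemeasurable measurable_fst.aemeasurable qc_aemeasurable]
  exact map_Q

lemma qc_snd : (qc μ ν).map Prod.snd = ν := by
  rw [qc, AEMeasurable.map_map_of_aemeasurable measurable_snd.aemeasurable qc_aemeasurable]
  exact map_Q

lemma qc_E (t : ℝ) : qc μ ν (E t) = ENNReal.ofReal |cdf μ t - cdf ν t| := by
  rw [qc, Measure.map_apply_of_aemeasurable qc_aemeasurable (E_measurable t),
    Measure.restrict_apply₀' measurableSet_Ioo.nullMeasurableSet]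
  have key : ∀ u ∈ Ioo (0:ℝ) 1,
      ((Q μ u, Q ν u) ∈ E t ↔ (u ≤ cdf μ t ∧ ¬ u ≤ cdf ν t) ∨
        (u ≤ cdf ν t ∧ ¬ u ≤ cdf μ t)) := by
    intro u hu
    rw [mem_E]
    simp only [Q_le_iff hu]
  rcases le_total (cdf ν t) (cdf μ t) with h | h
  · have hset : (fun u => (Q μ u, Q ν u)) ⁻¹' E t ∩ Ioo (0:ℝ) 1 =
        Ioc (cdf ν t) (cdf μ t) ∩ Ioo (0:ℝ) 1 := by
      ext u
      constructor
      · rintro ⟨hE, hu⟩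
        refine ⟨?_, hu⟩
        rcases (key u hu).1 hE with ⟨hμt, hνt⟩ | ⟨hνt, hμt⟩
        · exact ⟨not_le.1 hνt, hμt⟩
        · exact absurd (hνt.trans h) hμt
      · rintro ⟨⟨hl, hr⟩, hu⟩
        exact ⟨(key u hu).2 (Or.inl ⟨hr, not_le.2 hl⟩), hu⟩
    rw [hset, abs_of_nonneg (sub_nonneg.2 h)]
    apply le_antisymm
    · calc volume (Ioc (cdf ν t) (cdf μ t) ∩ Ioo (0:ℝ) 1)
          ≤ volume (Ioc (cdf ν t) (cdf μ t)) := measure_mono inter_subset_left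
        _ = ENNReal.ofReal (cdf μ t - cdf ν t) := Real.volume_Ioc
    · calc ENNReal.ofReal (cdf μ t - cdf ν t) = volume (Ioo (cdf ν t) (cdf μ t)) :=
          Real.volume_Ioo.symm
        _ ≤ volume (Ioc (cdf ν t) (cdf μ t) ∩ Ioo (0:ℝ) 1) := by
            refine measure_mono fun u hu => ⟨⟨hu.1, hu.2.le⟩,
              lt_of_le_of_lt (cdf_nonneg ν t) hu.1, lt_of_lt_of_le hu.2 (cdf_le_one μ t)⟩
  · have hset : (fun u => (Q μ u, Q ν u)) ⁻¹' E t ∩ Ioo (0:ℝ) 1 =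
        Ioc (cdf μ t) (cdf ν t) ∩ Ioo (0:ℝ) 1 := by
      ext u
      constructor
      · rintro ⟨hE, hu⟩
        refine ⟨?_, hu⟩
        rcases (key u hu).1 hE with ⟨hμt, hνt⟩ | ⟨hνt, hμt⟩
        · exact absurd (hμt.trans h) hνt
        · exact ⟨not_le.1 hμt, hνt⟩
      · rintro ⟨⟨hl, hr⟩, hu⟩
        exact ⟨(key u hu).2 (Or.inr ⟨hr, not_le.2 hl⟩), hu⟩
    rw [hset, abs_of_nonpos (sub_nonpos.2 h), neg_sub]
    apply le_antisymm
    · calc volume (Ioc (cdf μ t) (cdf ν t) ∩ Ioo (0:ℝ) 1)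
          ≤ volume (Ioc (cdf μ t) (cdf ν t)) := measure_mono inter_subset_left
        _ = ENNReal.ofReal (cdf ν t - cdf μ t) := Real.volume_Ioc
    · calc ENNReal.ofReal (cdf ν t - cdf μ t) = volume (Ioo (cdf μ t) (cdf ν t)) :=
          Real.volume_Ioo.symm
        _ ≤ volume (Ioc (cdf μ t) (cdf ν t) ∩ Ioo (0:ℝ) 1) := by
            refine measure_mono fun u hu => ⟨⟨hu.1, hu.2.le⟩,
              lt_of_le_of_lt (cdf_nonneg μ t) hu.1, lt_of_lt_of_le hu.2 (cdf_le_one ν t)⟩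

/-! ### Cost finiteness -/

lemma cost_ne_top {π : Measure (ℝ × ℝ)} (h1 : π.map Prod.fst = μ)
    (h2 : π.map Prod.snd = ν) (hμ : Integrable (fun x => x) μ)
    (hν : Integrable (fun x => x) ν) :
    ∫⁻ p, ENNReal.ofReal |p.1 - p.2| ∂π ≠ ⊤ := by
  have hf : Measurable fun p : ℝ × ℝ => ENNReal.ofReal |p.1| :=
    measurable_fst.abs.ennreal_ofReal
  have hg : Measurable fun p : ℝ × ℝ => ENNReal.ofReal |p.2| :=
    measurable_snd.abs.ennreal_ofReal
  have hb : ∫⁻ p, ENNReal.ofReal |p.1 - p.2| ∂π ≤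
      ∫⁻ p, (ENNReal.ofReal |p.1| + ENNReal.ofReal |p.2|) ∂π := by
    refine lintegral_mono fun p => ?_
    rw [← ENNReal.ofReal_add (abs_nonneg _) (abs_nonneg _)]
    exact ENNReal.ofReal_le_ofReal (abs_sub _ _)
  refine ne_of_lt (lt_of_le_of_lt hb ?_)
  rw [lintegral_add_left hf]
  have e1 : ∫⁻ p : ℝ × ℝ, ENNReal.ofReal |p.1| ∂π = ∫⁻ x, ENNReal.ofReal |x| ∂μ := by
    rw [← h1, lintegral_map measurable_abs.ennreal_ofReal measurable_fst]
  have e2 : ∫⁻ p : ℝ × ℝ, ENNReal.ofReal |p.2| ∂π = ∫⁻ x, ENNReal.ofReal |x| ∂ν := by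
    rw [← h2, lintegral_map measurable_abs.ennreal_ofReal measurable_snd]
  rw [e1, e2]
  have fμ : ∫⁻ x, ENNReal.ofReal |x| ∂μ < ⊤ := by
    have := hμ.hasFiniteIntegral
    rw [hasFiniteIntegral_iff_norm] at this
    simpa [Real.norm_eq_abs] using this
  have fν : ∫⁻ x, ENNReal.ofReal |x| ∂ν < ⊤ := by
    have := hν.hasFiniteIntegral
    rw [hasFiniteIntegral_iff_norm] at this
    simpa [Real.norm_eq_abs] using this
  exact ENNReal.add_lt_top.2 ⟨fμ, fν⟩

lemma cost_integrable {π : Measure (ℝ × ℝ)} (h1 : π.map Prod.fst = μ)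
    (h2 : π.map Prod.snd = ν) (hμ : Integrable (fun x => x) μ)
    (hν : Integrable (fun x => x) ν) :
    Integrable (fun p : ℝ × ℝ => |p.1 - p.2|) π := by
  constructor
  · exact ((measurable_fst.sub measurable_snd).abs).aestronglyMeasurable
  · rw [hasFiniteIntegral_iff_ofReal (Eventually.of_forall fun p => abs_nonneg _)]
    exact lt_top_iff_ne_top.2 (cost_ne_top h1 h2 hμ hν)

lemma cost_eq_toReal {π : Measure (ℝ × ℝ)} (h1 : π.map Prod.fst = μ)
    (h2 : π.map Prod.snd = ν) :
    ∫ p, |p.1 - p.2| ∂π = (∫⁻ p, ENNReal.ofReal |p.1 - p.2| ∂π).toReal := by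
  rw [integral_eq_lintegral_of_nonneg_ae (f := fun p : ℝ × ℝ => |p.1 - p.2|) (Eventually.of_forall fun p => abs_nonneg _)
    ((measurable_fst.sub measurable_snd).abs).aestronglyMeasurable]

end KantorovichAux

open KantorovichAux

/-- For probability measures on `ℝ` with finite first moments,
`W₁(μ, ν) = ∫ |F_μ(x) - F_ν(x)| dx`. -/
theorem kantorovich_eq_integral_abs_cdf_sub (μ ν : Measure ℝ)
    [IsProbabilityMeasure μ] [IsProbabilityMeasure ν]
    (hμ : Integrable (fun x => x) μ) (hν : Integrable (fun x => x) ν) :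
    W1 μ ν = ∫ x, |cdf μ x - cdf ν x| := by
  have hqc1 : (qc μ ν).map Prod.fst = μ := qc_fst
  have hqc2 : (qc μ ν).map Prod.snd = ν := qc_snd
  have hqcP : IsProbabilityMeasure (qc μ ν) := isProbOfCoupling hqc1
  -- the common ENNReal-valued quantity
  set L : ENNReal := ∫⁻ t, ENNReal.ofReal |cdf μ t - cdf ν t| with hL
  have hqc_cost : ∫⁻ p, ENNReal.ofReal |p.1 - p.2| ∂(qc μ ν) = L := by
    rw [cost_eq_lintegral_E]
    exact lintegral_congr fun t => qc_E t
  have hLne : L ≠ ⊤ := by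
    rw [← hqc_cost]
    exact cost_ne_top hqc1 hqc2 hμ hν
  have hcdf_meas : Measurable fun x => |cdf μ x - cdf ν x| :=
    ((monotone_cdf μ).measurable.sub (monotone_cdf ν).measurable).abs
  have hC : ∫ x, |cdf μ x - cdf ν x| = L.toReal := by
    rw [integral_eq_lintegral_of_nonneg_ae (Eventually.of_forall fun x => abs_nonneg _)
      hcdf_meas.aestronglyMeasurable]
  rw [hC, W1]
  have hne : Nonempty {π : Measure (ℝ × ℝ) // π.map Prod.fst = μ ∧ π.map Prod.snd = ν} :=
    ⟨⟨qc μ ν, hqc1, hqc2⟩⟩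
  have hbdd : BddBelow (Set.range fun π : {π : Measure (ℝ × ℝ) //
      π.map Prod.fst = μ ∧ π.map Prod.snd = ν} =>
      ∫ p, |p.1 - p.2| ∂(π : Measure (ℝ × ℝ))) := by
    refine ⟨0, ?_⟩
    rintro x ⟨π, rfl⟩
    exact integral_nonneg fun p => abs_nonneg _
  apply le_antisymm
  · -- infimum ≤ cost of quantile coupling = L.toReal
    have : (∫ p, |p.1 - p.2| ∂(qc μ ν)) = L.toReal := by
      rw [cost_eq_toReal hqc1 hqc2, hqc_cost]
    calc (⨅ π : {π : Measure (ℝ × ℝ) // π.map Prod.fst = μ ∧ π.map Prod.snd = ν},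
          ∫ p, |p.1 - p.2| ∂(π : Measure (ℝ × ℝ)))
        ≤ ∫ p, |p.1 - p.2| ∂(qc μ ν) := ciInf_le hbdd ⟨qc μ ν, hqc1, hqc2⟩
      _ = L.toReal := this
  · refine le_ciInf fun π => ?_
    obtain ⟨π, h1, h2⟩ := π
    have hP : IsProbabilityMeasure π := isProbOfCoupling h1
    have hcost_ne : ∫⁻ p, ENNReal.ofReal |p.1 - p.2| ∂π ≠ ⊤ := cost_ne_top h1 h2 hμ hν
    have hge : L ≤ ∫⁻ p, ENNReal.ofReal |p.1 - p.2| ∂π := by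
      rw [cost_eq_lintegral_E]
      exact lintegral_mono fun t => lower_pointwise h1 h2 t
    calc L.toReal ≤ (∫⁻ p, ENNReal.ofReal |p.1 - p.2| ∂π).toReal :=
        ENNReal.toReal_le_toReal hLne hcost_ne |>.2 hge
      _ = ∫ p, |p.1 - p.2| ∂π := (cost_eq_toReal h1 h2).symm
end

section
/- Let X₁, …, Xₙ be identically distributed integrable real random variables with distribution μ, and let μₙ be the empirical measure. For M > 0 define X_i' = (X_i ∧ M) ∨ (−M) and X_i'' = X_i − X_i'. Let F_k'(t) = (1/k)∑_{j=1}^k 1_{X_j' ≤ t} and F'(t) = P(X₁' ≤ t). Then for every n, max_{1≤k≤n} k·W₁(μ_k, μ) ≤ max_{1≤k≤n} k·∫_ℝ |F_k'(t) − F'(t)| dt + ∑_{i=1}^n (|X_i''| + E|X_i''|). -/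
open MeasureTheory

/-- The empirical measure `(1/k) ∑_{j=1}^k δ_{X_j(ω)}`. -/
noncomputable def empiricalMeasure {Ω : Type*} [MeasurableSpace Ω] (k : ℕ)
    (X : ℕ → Ω → ℝ) (ω : Ω) : Measure ℝ :=
  (k : ENNReal)⁻¹ • ∑ j ∈ Finset.Icc 1 k, Measure.dirac (X j ω)

/-- Truncation at level `M` : `(x ∧ M) ∨ (-M)`. -/
def trunc (M x : ℝ) : ℝ := max (min x M) (-M)

open ProbabilityTheory Set Filter Topology
open scoped ENNReal
set_option linter.unusedSectionVars false
set_option linter.unusedVariables false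

lemma ind_diff_eq (a b t : ℝ) :
    |(if a ≤ t then (1:ℝ) else 0) - (if b ≤ t then 1 else 0)|
      = (Ico (min a b) (max a b)).indicator (fun _ => (1:ℝ)) t := by
  by_cases h1 : a ≤ t <;> by_cases h2 : b ≤ t
  · rw [Set.indicator_of_notMem (fun h => absurd h.2 (not_lt.2 (max_le h1 h2)))]
    simp [h1, h2]
  · rw [Set.indicator_of_mem (Set.mem_Ico.2 ⟨le_trans (min_le_left a b) h1,
      lt_of_lt_of_le (lt_of_not_ge h2) (le_max_right a b)⟩)]
    simp [h1, h2]
  · rw [Set.indicator_of_mem (Set.mem_Ico.2 ⟨le_trans (min_le_right a b) h2,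
      lt_of_lt_of_le (lt_of_not_ge h1) (le_max_left a b)⟩)]
    simp [h1, h2]
  · rw [Set.indicator_of_notMem
      (fun h => absurd h.1 (not_le.2 (lt_min (lt_of_not_ge h1) (lt_of_not_ge h2))))]
    simp [h1, h2]

lemma ind_diff_eq' (a b u : ℝ) :
    |(if u ≤ a then (1:ℝ) else 0) - (if u ≤ b then 1 else 0)|
      = (Ioc (min a b) (max a b)).indicator (fun _ => (1:ℝ)) u := by
  by_cases h1 : u ≤ a <;> by_cases h2 : u ≤ b
  · rw [Set.indicator_of_notMem (fun h => absurd h.1 (not_lt.2 (le_min h1 h2)))]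
    simp [h1, h2]
  · rw [Set.indicator_of_mem (Set.mem_Ioc.2 ⟨lt_of_le_of_lt (min_le_right a b) (lt_of_not_ge h2),
      le_trans h1 (le_max_left a b)⟩)]
    simp [h1, h2]
  · rw [Set.indicator_of_mem (Set.mem_Ioc.2 ⟨lt_of_le_of_lt (min_le_left a b) (lt_of_not_ge h1),
      le_trans h2 (le_max_right a b)⟩)]
    simp [h1, h2]
  · rw [Set.indicator_of_notMem
      (fun h => absurd h.2 (not_le.2 (max_lt (lt_of_not_ge h1) (lt_of_not_ge h2))))]
    simp [h1, h2]

lemma lint_D (a b : ℝ) :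
    ∫⁻ t, ENNReal.ofReal |(if a ≤ t then (1:ℝ) else 0) - (if b ≤ t then 1 else 0)|
      = ENNReal.ofReal |a - b| := by
  have h : ∀ t, ENNReal.ofReal |(if a ≤ t then (1:ℝ) else 0) - (if b ≤ t then 1 else 0)|
      = (Ico (min a b) (max a b)).indicator (fun _ => (1:ℝ≥0∞)) t := by
    intro t
    rw [ind_diff_eq]
    by_cases h : t ∈ Ico (min a b) (max a b) <;> simp [Set.indicator_apply, h]
  rw [lintegral_congr h, lintegral_indicator measurableSet_Ico _, setLIntegral_one,
    Real.volume_Ico, max_sub_min_eq_abs, abs_sub_comm]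

lemma vol_Ioc_inter_Ioo {m M : ℝ} (hm : 0 ≤ m) (hM : M ≤ 1) :
    volume (Ioc m M ∩ Ioo (0:ℝ) 1) = ENNReal.ofReal (M - m) := by
  rcases le_or_gt M m with h | h
  · rw [Set.Ioc_eq_empty (not_lt.2 h), Set.empty_inter, measure_empty, Eq.comm,
      ENNReal.ofReal_eq_zero]
    linarith
  · apply le_antisymm
    · calc volume (Ioc m M ∩ Ioo (0:ℝ) 1) ≤ volume (Ioc m M) :=
            measure_mono Set.inter_subset_left
        _ = ENNReal.ofReal (M - m) := Real.volume_Ioc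
    · calc ENNReal.ofReal (M - m) = volume (Ioo m M) := Real.volume_Ioo.symm
        _ ≤ volume (Ioc m M ∩ Ioo (0:ℝ) 1) := by
            apply measure_mono
            intro u hu
            exact ⟨⟨hu.1, hu.2.le⟩, lt_of_le_of_lt hm hu.1, lt_of_lt_of_le hu.2 hM⟩

lemma lint_D' {a b : ℝ} (ha : a ∈ Icc (0:ℝ) 1) (hb : b ∈ Icc (0:ℝ) 1) :
    ∫⁻ u in Ioo (0:ℝ) 1,
        ENNReal.ofReal |(if u ≤ a then (1:ℝ) else 0) - (if u ≤ b then 1 else 0)|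
      = ENNReal.ofReal |a - b| := by
  have h : ∀ u, ENNReal.ofReal |(if u ≤ a then (1:ℝ) else 0) - (if u ≤ b then 1 else 0)|
      = (Ioc (min a b) (max a b)).indicator (fun _ => (1:ℝ≥0∞)) u := by
    intro u
    rw [ind_diff_eq']
    by_cases h : u ∈ Ioc (min a b) (max a b) <;> simp [Set.indicator_apply, h]
  rw [lintegral_congr h, lintegral_indicator measurableSet_Ioc _, setLIntegral_one,
    Measure.restrict_apply measurableSet_Ioc,
    vol_Ioc_inter_Ioo (le_min ha.1 hb.1) (max_le ha.2 hb.2), max_sub_min_eq_abs, abs_sub_comm]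


noncomputable def qf (μ : Measure ℝ) (u : ℝ) : ℝ :=
  if u ∈ Set.Ioo (0:ℝ) 1 then sInf {x | u ≤ cdf μ x} else 0

variable {μ : Measure ℝ} [IsProbabilityMeasure μ]

lemma qf_S_nonempty (μ : Measure ℝ) {u : ℝ} (hu : u ∈ Set.Ioo (0:ℝ) 1) :
    {x | u ≤ cdf μ x}.Nonempty := by
  obtain ⟨x, hx⟩ := ((tendsto_cdf_atTop μ).eventually (eventually_gt_nhds hu.2)).exists
  exact ⟨x, hx.le⟩

lemma qf_S_bddBelow (μ : Measure ℝ) {u : ℝ} (hu : u ∈ Set.Ioo (0:ℝ) 1) :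
    BddBelow {x | u ≤ cdf μ x} := by
  obtain ⟨x, hx⟩ := ((tendsto_cdf_atBot μ).eventually (eventually_lt_nhds hu.1)).exists
  refine ⟨x, fun s hs => ?_⟩
  by_contra h
  push_neg at h
  exact absurd ((monotone_cdf μ (le_of_lt h)).trans_lt hx) (not_lt.2 hs)

lemma qf_le_iff {u t : ℝ} (hu : u ∈ Set.Ioo (0:ℝ) 1) :
    qf μ u ≤ t ↔ u ≤ cdf μ t := by
  rw [qf, if_pos hu]
  constructor
  · intro h
    -- every x > sInf S is in S
    have key : ∀ x, sInf {x | u ≤ cdf μ x} < x → u ≤ cdf μ x := by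
      intro x hx
      obtain ⟨s, hs, hsx⟩ := exists_lt_of_csInf_lt (qf_S_nonempty μ hu) hx
      exact hs.trans ((monotone_cdf μ) hsx.le)
    have h2 : ∀ x ∈ Ioi t, u ≤ cdf μ x := fun x hx => key x (h.trans_lt hx)
    have hc : Tendsto (cdf μ) (𝓝[>] t) (𝓝 (cdf μ t)) :=
      ((cdf μ).right_continuous t).tendsto.mono_left (nhdsWithin_mono _ Ioi_subset_Ici_self)
    exact ge_of_tendsto hc (eventually_nhdsWithin_of_forall h2)
  · intro h
    exact csInf_le (qf_S_bddBelow μ hu) h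

lemma measurable_qf : Measurable (qf μ) := by
  apply measurable_of_Iic
  intro t
  have : qf μ ⁻¹' Iic t =
      (Ioo (0:ℝ) 1 ∩ Iic (cdf μ t)) ∪ ((Ioo (0:ℝ) 1)ᶜ ∩ {u : ℝ | (0:ℝ) ≤ t}) := by
    ext u
    by_cases hu : u ∈ Set.Ioo (0:ℝ) 1
    · simp [Set.mem_preimage, qf_le_iff hu, hu]
    · simp [Set.mem_preimage, qf, if_neg hu, hu, Set.mem_setOf_eq]
  rw [this]
  by_cases ht : (0:ℝ) ≤ t
  · have : {u : ℝ | (0:ℝ) ≤ t} = Set.univ := by simp [ht]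
    rw [this]
    exact (measurableSet_Ioo.inter measurableSet_Iic).union
      (measurableSet_Ioo.compl.inter MeasurableSet.univ)
  · have : {u : ℝ | (0:ℝ) ≤ t} = ∅ := by simp [ht]
    rw [this]
    exact (measurableSet_Ioo.inter measurableSet_Iic).union
      (measurableSet_Ioo.compl.inter MeasurableSet.empty)

lemma map_qf (μ : Measure ℝ) [IsProbabilityMeasure μ] :
    Measure.map (qf μ) (volume.restrict (Set.Ioo (0:ℝ) 1)) = μ := by
  have hmeas : Measurable (qf μ) := measurable_qf
  have hprob : IsProbabilityMeasure (Measure.map (qf μ) (volume.restrict (Set.Ioo (0:ℝ) 1))) := by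
    constructor
    rw [Measure.map_apply hmeas MeasurableSet.univ]
    simp
  refine Measure.ext_of_Iic _ _ (fun t => ?_)
  rw [Measure.map_apply hmeas measurableSet_Iic]
  have hpre : qf μ ⁻¹' Iic t ∩ Ioo (0:ℝ) 1 = Ioc (0:ℝ) (cdf μ t) ∩ Ioo (0:ℝ) 1 := by
    ext u
    simp only [Set.mem_inter_iff, Set.mem_preimage, Set.mem_Iic, Set.mem_Ioc, Set.mem_Ioo]
    constructor
    · rintro ⟨h1, h2⟩
      exact ⟨⟨h2.1, (qf_le_iff ⟨h2.1, h2.2⟩).1 h1⟩, h2⟩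
    · rintro ⟨h1, h2⟩
      exact ⟨(qf_le_iff h2).2 h1.2, h2⟩
  rw [Measure.restrict_apply (hmeas measurableSet_Iic), hpre]
  have h1 : cdf μ t ≤ 1 := cdf_le_one μ t
  have h0 : 0 ≤ cdf μ t := cdf_nonneg μ t
  have : volume (Ioc (0:ℝ) (cdf μ t) ∩ Ioo (0:ℝ) 1) = ENNReal.ofReal (cdf μ t) := by
    rcases lt_or_eq_of_le h1 with h | h
    · rw [Set.inter_eq_left.2 ?_, Real.volume_Ioc, sub_zero]
      intro u hu
      exact ⟨hu.1, hu.2.trans_lt h⟩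
    · rw [h, Set.inter_eq_right.2 Set.Ioo_subset_Ioc_self, Real.volume_Ioo, sub_zero]
  rw [this, ofReal_cdf]


lemma W1_le_lintegral_cdf (μ ν : Measure ℝ) [IsProbabilityMeasure μ] [IsProbabilityMeasure ν] :
    W1 μ ν ≤ (∫⁻ t, ENNReal.ofReal |(μ (Iic t)).toReal - (ν (Iic t)).toReal|).toReal := by
  set ν₀ := volume.restrict (Ioo (0:ℝ) 1) with hν₀
  have hqm : Measurable (qf μ) := measurable_qf
  have hqn : Measurable (qf ν) := measurable_qf
  have hΦ : Measurable (fun u => (qf μ u, qf ν u)) := hqm.prodMk hqn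
  set π : Measure (ℝ × ℝ) := Measure.map (fun u => (qf μ u, qf ν u)) ν₀ with hπ
  have hfst : π.map Prod.fst = μ := by
    rw [hπ, Measure.map_map measurable_fst hΦ]
    exact map_qf μ
  have hsnd : π.map Prod.snd = ν := by
    rw [hπ, Measure.map_map measurable_snd hΦ]
    exact map_qf ν
  have h1 : W1 μ ν ≤ ∫ p, |p.1 - p.2| ∂π := by
    refine ciInf_le ⟨0, ?_⟩ (⟨π, hfst, hsnd⟩ :
      {π : Measure (ℝ × ℝ) // π.map Prod.fst = μ ∧ π.map Prod.snd = ν})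
    rintro r ⟨π', rfl⟩
    exact integral_nonneg (fun p => abs_nonneg _)
  have h2 : ∫ p, |p.1 - p.2| ∂π = ∫ u, |qf μ u - qf ν u| ∂ν₀ :=
    integral_map hΦ.aemeasurable ((measurable_fst.sub measurable_snd).abs).aestronglyMeasurable
  have h3 : ∫ u, |qf μ u - qf ν u| ∂ν₀ = (∫⁻ u, ENNReal.ofReal |qf μ u - qf ν u| ∂ν₀).toReal :=
    integral_eq_lintegral_of_nonneg_ae (ae_of_all _ fun u => abs_nonneg _)
      ((hqm.sub hqn).abs.aestronglyMeasurable)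
  -- key lintegral identity
  set g : ℝ → ℝ → ℝ≥0∞ := fun u t =>
    ENNReal.ofReal |(if qf μ u ≤ t then (1:ℝ) else 0) - (if qf ν u ≤ t then 1 else 0)| with hg
  have hg_meas : Measurable (Function.uncurry g) := by
    apply ENNReal.measurable_ofReal.comp
    apply Measurable.abs
    exact Measurable.sub
      (Measurable.ite (measurableSet_le (hqm.comp measurable_fst) measurable_snd)
        measurable_const measurable_const)
      (Measurable.ite (measurableSet_le (hqn.comp measurable_fst) measurable_snd)
        measurable_const measurable_const)
  have inner_t : ∀ u, ∫⁻ t, g u t = ENNReal.ofReal |qf μ u - qf ν u| := fun u => lint_D _ _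
  have inner_u : ∀ t, ∫⁻ u, g u t ∂ν₀ = ENNReal.ofReal |cdf μ t - cdf ν t| := by
    intro t
    have congr1 : ∀ u ∈ Ioo (0:ℝ) 1, g u t =
        ENNReal.ofReal |(if u ≤ cdf μ t then (1:ℝ) else 0) - (if u ≤ cdf ν t then 1 else 0)| := by
      intro u hu
      have e1 : (if qf μ u ≤ t then (1:ℝ) else 0) = (if u ≤ cdf μ t then 1 else 0) := by
        by_cases h : u ≤ cdf μ t
        · rw [if_pos ((qf_le_iff hu).2 h), if_pos h]
        · rw [if_neg (fun hh => h ((qf_le_iff hu).1 hh)), if_neg h]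
      have e2 : (if qf ν u ≤ t then (1:ℝ) else 0) = (if u ≤ cdf ν t then 1 else 0) := by
        by_cases h : u ≤ cdf ν t
        · rw [if_pos ((qf_le_iff hu).2 h), if_pos h]
        · rw [if_neg (fun hh => h ((qf_le_iff hu).1 hh)), if_neg h]
      simp only [hg]
      rw [e1, e2]
    rw [hν₀, setLIntegral_congr_fun measurableSet_Ioo congr1]
    exact lint_D' ⟨cdf_nonneg μ t, cdf_le_one μ t⟩ ⟨cdf_nonneg ν t, cdf_le_one ν t⟩
  have key : ∫⁻ u, ENNReal.ofReal |qf μ u - qf ν u| ∂ν₀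
      = ∫⁻ t, ENNReal.ofReal |cdf μ t - cdf ν t| := by
    calc ∫⁻ u, ENNReal.ofReal |qf μ u - qf ν u| ∂ν₀ = ∫⁻ u, ∫⁻ t, g u t ∂volume ∂ν₀ := by
          exact (lintegral_congr inner_t).symm
      _ = ∫⁻ t, ∫⁻ u, g u t ∂ν₀ ∂volume := lintegral_lintegral_swap hg_meas.aemeasurable
      _ = ∫⁻ t, ENNReal.ofReal |cdf μ t - cdf ν t| := lintegral_congr inner_u
  have hcdf_eq : ∀ t : ℝ, |(μ (Iic t)).toReal - (ν (Iic t)).toReal| = |cdf μ t - cdf ν t| := by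
    intro t
    rw [cdf_eq_real, cdf_eq_real, measureReal_def, measureReal_def]
  calc W1 μ ν ≤ ∫ p, |p.1 - p.2| ∂π := h1
    _ = (∫⁻ u, ENNReal.ofReal |qf μ u - qf ν u| ∂ν₀).toReal := by rw [h2, h3]
    _ = (∫⁻ t, ENNReal.ofReal |cdf μ t - cdf ν t|).toReal := by rw [key]
    _ = (∫⁻ t, ENNReal.ofReal |(μ (Iic t)).toReal - (ν (Iic t)).toReal|).toReal := by
        simp_rw [hcdf_eq]

lemma trunc_mem {M : ℝ} (hM : 0 < M) (x : ℝ) : trunc M x ∈ Icc (-M) M :=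
  ⟨le_max_right _ _, max_le (min_le_right _ _) (by linarith)⟩

lemma continuous_trunc (M : ℝ) : Continuous (trunc M) :=
  ((continuous_id.min continuous_const).max continuous_const)

lemma emp_prob {Ω : Type*} [MeasurableSpace Ω] {k : ℕ} (hk : 1 ≤ k)
    (X : ℕ → Ω → ℝ) (ω : Ω) : IsProbabilityMeasure (empiricalMeasure k X ω) := by
  constructor
  rw [empiricalMeasure, Measure.smul_apply, Measure.coe_finset_sum, Finset.sum_apply]
  simp only [Measure.dirac_apply' _ MeasurableSet.univ, Set.indicator_univ, Pi.one_apply,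
    Finset.sum_const, Nat.card_Icc]
  rw [smul_eq_mul, Nat.add_sub_cancel, nsmul_eq_mul, mul_one]
  exact ENNReal.inv_mul_cancel (by exact_mod_cast (Nat.pos_of_ne_zero (by omega)).ne')
    (ENNReal.natCast_ne_top k)

lemma emp_apply {Ω : Type*} [MeasurableSpace Ω] {k : ℕ} (hk : 1 ≤ k)
    (X : ℕ → Ω → ℝ) (ω : Ω) (t : ℝ) :
    ((empiricalMeasure k X ω) (Iic t)).toReal
      = (1/(k:ℝ)) * ∑ j ∈ Finset.Icc 1 k, (if X j ω ≤ t then (1:ℝ) else 0) := by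
  rw [empiricalMeasure, Measure.smul_apply, Measure.coe_finset_sum, Finset.sum_apply]
  have : ∀ j ∈ Finset.Icc 1 k, Measure.dirac (X j ω) (Iic t)
      = ENNReal.ofReal (if X j ω ≤ t then (1:ℝ) else 0) := by
    intro j _
    rw [Measure.dirac_apply' _ measurableSet_Iic]
    by_cases h : X j ω ≤ t
    · rw [Set.indicator_of_mem (Set.mem_Iic.2 h), if_pos h, Pi.one_apply, ENNReal.ofReal_one]
    · rw [Set.indicator_of_notMem (fun hh => h (Set.mem_Iic.1 hh)), if_neg h,
        ENNReal.ofReal_zero]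
  rw [Finset.sum_congr rfl this, ← ENNReal.ofReal_sum_of_nonneg
    (fun j _ => by positivity), smul_eq_mul, ENNReal.toReal_mul, ENNReal.toReal_ofReal
    (Finset.sum_nonneg (fun j _ => by positivity)), ENNReal.toReal_inv, ENNReal.toReal_natCast, one_div]

lemma key_bound {Ω : Type*} [MeasurableSpace Ω] (μ : Measure ℝ) [IsProbabilityMeasure μ]
    (hint : Integrable (fun x => x) μ) {M : ℝ} (hM : 0 < M) {k : ℕ} (hk : 1 ≤ k)
    (X : ℕ → Ω → ℝ) (ω : Ω) :
    W1 (empiricalMeasure k X ω) μ ≤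
      (∫ t, |(1 / (k : ℝ)) * ∑ j ∈ Finset.Icc 1 k,
          (if trunc M (X j ω) ≤ t then (1 : ℝ) else 0)
        - ((μ.map (fun x => trunc M x)) (Set.Iic t)).toReal|)
      + (1/(k:ℝ)) * ∑ j ∈ Finset.Icc 1 k, |X j ω - trunc M (X j ω)|
      + ∫ x, |x - trunc M x| ∂μ := by
  classical
  have htm : Measurable (fun x => trunc M x) := (continuous_trunc M).measurable
  haveI : IsProbabilityMeasure (μ.map (fun x => trunc M x)) :=
    Measure.isProbabilityMeasure_map htm.aemeasurable
  haveI := emp_prob hk X ω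
  set μ' := μ.map (fun x => trunc M x) with hμ'
  set Ek : ℝ → ℝ := fun t => (1/(k:ℝ)) * ∑ j ∈ Finset.Icc 1 k,
      (if trunc M (X j ω) ≤ t then (1:ℝ) else 0) with hEk
  set F' : ℝ → ℝ := fun t => (μ' (Iic t)).toReal with hF'
  set Fk : ℝ → ℝ := fun t => ((empiricalMeasure k X ω) (Iic t)).toReal with hFk
  set F : ℝ → ℝ := fun t => (μ (Iic t)).toReal with hF
  -- measurability facts
  have hF'mono : Monotone F' := fun a b hab =>
    ENNReal.toReal_mono (measure_ne_top _ _) (measure_mono (Iic_subset_Iic.2 hab))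
  have hF'meas : Measurable F' := hF'mono.measurable
  have hEkmeas : Measurable Ek := by
    apply Measurable.const_mul
    exact Finset.measurable_sum _ (fun j _ =>
      Measurable.ite (measurableSet_le measurable_const measurable_id)
        measurable_const measurable_const)
  -- the three lintegrals
  set L1 : ℝ≥0∞ := ∫⁻ t, ENNReal.ofReal ((1/(k:ℝ)) * ∑ j ∈ Finset.Icc 1 k,
      |(if X j ω ≤ t then (1:ℝ) else 0) - (if trunc M (X j ω) ≤ t then 1 else 0)|) with hL1
  set L2 : ℝ≥0∞ := ∫⁻ t, ENNReal.ofReal |Ek t - F' t| with hL2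
  set L3 : ℝ≥0∞ := ∫⁻ t, ∫⁻ x, ENNReal.ofReal
      |(if x ≤ t then (1:ℝ) else 0) - (if trunc M x ≤ t then 1 else 0)| ∂μ with hL3
  have mD : ∀ c d : ℝ, Measurable (fun t =>
      ENNReal.ofReal |(if c ≤ t then (1:ℝ) else 0) - (if d ≤ t then 1 else 0)|) := by
    intro c d
    apply ENNReal.measurable_ofReal.comp
    exact Measurable.abs (Measurable.sub
      (Measurable.ite (measurableSet_le measurable_const measurable_id)
        measurable_const measurable_const)
      (Measurable.ite (measurableSet_le measurable_const measurable_id)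
        measurable_const measurable_const))
  have hL1_eq : L1 = ENNReal.ofReal ((1/(k:ℝ)) * ∑ j ∈ Finset.Icc 1 k,
      |X j ω - trunc M (X j ω)|) := by
    rw [hL1]
    have step1 : ∀ t : ℝ, ENNReal.ofReal ((1/(k:ℝ)) * ∑ j ∈ Finset.Icc 1 k,
        |(if X j ω ≤ t then (1:ℝ) else 0) - (if trunc M (X j ω) ≤ t then 1 else 0)|)
        = ENNReal.ofReal (1/(k:ℝ)) * ∑ j ∈ Finset.Icc 1 k, ENNReal.ofReal
          |(if X j ω ≤ t then (1:ℝ) else 0) - (if trunc M (X j ω) ≤ t then 1 else 0)| := by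
      intro t
      rw [ENNReal.ofReal_mul (by positivity),
        ENNReal.ofReal_sum_of_nonneg (fun j _ => abs_nonneg _)]
    rw [lintegral_congr step1, lintegral_const_mul _
      (Finset.measurable_sum _ (fun j _ => mD _ _)),
      lintegral_finset_sum _ (fun j _ => mD _ _)]
    have step2 : ∀ j ∈ Finset.Icc 1 k, (∫⁻ t, ENNReal.ofReal
        |(if X j ω ≤ t then (1:ℝ) else 0) - (if trunc M (X j ω) ≤ t then 1 else 0)|)
        = ENNReal.ofReal |X j ω - trunc M (X j ω)| := fun j _ => lint_D _ _
    rw [Finset.sum_congr rfl step2, ← ENNReal.ofReal_sum_of_nonneg (fun j _ => abs_nonneg _),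
      ← ENNReal.ofReal_mul (by positivity)]
  have hEk01 : ∀ t, Ek t ∈ Icc (0:ℝ) 1 := by
    intro t
    constructor
    · simp only [hEk]; positivity
    · simp only [hEk]
      have : (∑ j ∈ Finset.Icc 1 k, (if trunc M (X j ω) ≤ t then (1:ℝ) else 0)) ≤ k := by
        calc (∑ j ∈ Finset.Icc 1 k, (if trunc M (X j ω) ≤ t then (1:ℝ) else 0))
            ≤ ∑ j ∈ Finset.Icc 1 k, (1:ℝ) :=
              Finset.sum_le_sum (fun j _ => by split <;> norm_num)
          _ = k := by simp [Nat.card_Icc]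
      have hkpos : (0:ℝ) < k := by exact_mod_cast Nat.lt_of_lt_of_le Nat.zero_lt_one hk
      rw [div_mul_eq_mul_div, one_mul, div_le_one hkpos]
      exact this
  have hF'01 : ∀ t, F' t ∈ Icc (0:ℝ) 1 := by
    intro t
    exact ⟨ENNReal.toReal_nonneg, by
      rw [hF']
      calc (μ' (Iic t)).toReal ≤ (1 : ℝ≥0∞).toReal :=
            ENNReal.toReal_mono ENNReal.one_ne_top prob_le_one
        _ = 1 := ENNReal.toReal_one⟩
  have hEkF'_out : ∀ t, t ∉ Ico (-M) M → Ek t = F' t := by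
    intro t ht
    rw [Set.mem_Ico, not_and_or, not_le, not_lt] at ht
    rcases ht with ht | ht
    · have he : Ek t = 0 := by
        simp only [hEk]
        have : ∀ j ∈ Finset.Icc 1 k, (if trunc M (X j ω) ≤ t then (1:ℝ) else 0) = 0 := by
          intro j _
          rw [if_neg]
          intro h
          exact absurd (le_trans (trunc_mem hM (X j ω)).1 h) (not_le.2 ht)
        rw [Finset.sum_congr rfl this, Finset.sum_const, smul_zero, mul_zero]
      have hf : F' t = 0 := by
        simp only [hF', hμ']
        rw [Measure.map_apply htm measurableSet_Iic]
        have : (fun x => trunc M x) ⁻¹' Iic t = ∅ := by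
          ext x
          simp only [Set.mem_preimage, Set.mem_Iic, Set.mem_empty_iff_false, iff_false]
          intro h
          exact absurd (le_trans (trunc_mem hM x).1 h) (not_le.2 ht)
        rw [this, measure_empty, ENNReal.toReal_zero]
      rw [he, hf]
    · have he : Ek t = 1 := by
        simp only [hEk]
        have : ∀ j ∈ Finset.Icc 1 k, (if trunc M (X j ω) ≤ t then (1:ℝ) else 0) = 1 := by
          intro j _
          exact if_pos (le_trans (trunc_mem hM (X j ω)).2 ht)
        rw [Finset.sum_congr rfl this, Finset.sum_const, Nat.card_Icc, Nat.add_sub_cancel,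
          nsmul_eq_mul, mul_one, one_div, inv_mul_cancel₀]
        exact_mod_cast (Nat.pos_of_ne_zero (by omega)).ne'
      have hf : F' t = 1 := by
        simp only [hF', hμ']
        rw [Measure.map_apply htm measurableSet_Iic]
        have : (fun x => trunc M x) ⁻¹' Iic t = Set.univ := by
          ext x
          simp only [Set.mem_preimage, Set.mem_Iic, Set.mem_univ, iff_true]
          exact le_trans (trunc_mem hM x).2 ht
        rw [this, measure_univ, ENNReal.toReal_one]
      rw [he, hf]
  have hL2_le : L2 ≤ 2 * volume (Ico (-M) M) := by
    rw [hL2]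
    calc (∫⁻ t, ENNReal.ofReal |Ek t - F' t|)
        ≤ ∫⁻ t, (Ico (-M) M).indicator (fun _ => (2:ℝ≥0∞)) t := by
          apply lintegral_mono
          intro t
          by_cases ht : t ∈ Ico (-M) M
          · rw [Set.indicator_of_mem ht]
            calc ENNReal.ofReal |Ek t - F' t| ≤ ENNReal.ofReal 2 := by
                  apply ENNReal.ofReal_le_ofReal
                  calc |Ek t - F' t| ≤ |Ek t| + |F' t| := abs_sub _ _
                    _ ≤ 1 + 1 := add_le_add
                        (abs_le.2 ⟨by linarith [(hEk01 t).1], (hEk01 t).2⟩)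
                        (abs_le.2 ⟨by linarith [(hF'01 t).1], (hF'01 t).2⟩)
                    _ = 2 := by norm_num
              _ = 2 := by norm_num
          · rw [Set.indicator_of_notMem ht]
            simp only [hEkF'_out t ht, sub_self, abs_zero, ENNReal.ofReal_zero, le_refl]
      _ = 2 * volume (Ico (-M) M) := by
          rw [lintegral_indicator measurableSet_Ico _, setLIntegral_const]
  have hL2_ne : L2 ≠ ⊤ :=
    ne_top_of_le_ne_top (by
      rw [Real.volume_Ico]
      exact ENNReal.mul_ne_top (by norm_num) ENNReal.ofReal_ne_top) hL2_le
  have hL2_toReal : L2.toReal = ∫ t, |Ek t - F' t| := by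
    rw [hL2]
    exact (integral_eq_lintegral_of_nonneg_ae (ae_of_all _ fun t => abs_nonneg _)
      ((hEkmeas.sub hF'meas).abs.aestronglyMeasurable)).symm
  have hUm : Measurable (fun p : ℝ × ℝ => ENNReal.ofReal
      |(if p.2 ≤ p.1 then (1:ℝ) else 0) - (if trunc M p.2 ≤ p.1 then 1 else 0)|) := by
    apply ENNReal.measurable_ofReal.comp
    exact Measurable.abs (Measurable.sub
      (Measurable.ite (measurableSet_le measurable_snd measurable_fst)
        measurable_const measurable_const)
      (Measurable.ite (measurableSet_le (htm.comp measurable_snd) measurable_fst)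
        measurable_const measurable_const))
  have hL3_eq : L3 = ∫⁻ x, ENNReal.ofReal |x - trunc M x| ∂μ := by
    rw [hL3, lintegral_lintegral_swap hUm.aemeasurable]
    exact lintegral_congr (fun x => lint_D x (trunc M x))
  have htrunc_int : Integrable (fun x => trunc M x) μ := by
    refine (integrable_const M).mono' htm.aestronglyMeasurable (ae_of_all _ fun x => ?_)
    rw [Real.norm_eq_abs]
    exact abs_le.2 ⟨(trunc_mem hM x).1, (trunc_mem hM x).2⟩
  have habs : Integrable (fun x => |x - trunc M x|) μ := (hint.sub htrunc_int).abs
  have hL3_ne : L3 ≠ ⊤ := by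
    rw [hL3_eq]
    exact habs.lintegral_lt_top.ne
  have hL3_toReal : L3.toReal = ∫ x, |x - trunc M x| ∂μ := by
    rw [hL3_eq]
    exact (integral_eq_lintegral_of_nonneg_ae (ae_of_all _ fun x => abs_nonneg _)
      ((measurable_id.sub htm).abs.aestronglyMeasurable)).symm
  have hFk_eq : ∀ t, Fk t = (1/(k:ℝ)) * ∑ j ∈ Finset.Icc 1 k,
      (if X j ω ≤ t then (1:ℝ) else 0) := fun t => emp_apply hk X ω t
  have hT : ∀ t : ℝ, μ' (Iic t) = μ {x | trunc M x ≤ t} := fun t => by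
    rw [hμ', Measure.map_apply htm measurableSet_Iic]; rfl
  have hTm : ∀ t : ℝ, MeasurableSet {x : ℝ | trunc M x ≤ t} := fun t =>
    htm measurableSet_Iic
  have h3 : ∀ t : ℝ, ENNReal.ofReal |F' t - F t| ≤ ∫⁻ x, ENNReal.ofReal
      |(if x ≤ t then (1:ℝ) else 0) - (if trunc M x ≤ t then 1 else 0)| ∂μ := by
    intro t
    have bound : ∀ s : Set ℝ, MeasurableSet s →
        (∀ x ∈ s, |(if x ≤ t then (1:ℝ) else 0) - (if trunc M x ≤ t then 1 else 0)| = 1) →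
        μ s ≤ ∫⁻ x, ENNReal.ofReal
          |(if x ≤ t then (1:ℝ) else 0) - (if trunc M x ≤ t then 1 else 0)| ∂μ := by
      intro s hs h1
      rw [← lintegral_indicator_one hs]
      apply lintegral_mono
      intro x
      by_cases hx : x ∈ s
      · rw [Set.indicator_of_mem hx]
        simp only [h1 x hx]
        simp
      · rw [Set.indicator_of_notMem hx]
        exact zero_le
    have bd1 : μ ({x | trunc M x ≤ t} \ Iic t) ≤ ∫⁻ x, ENNReal.ofReal
        |(if x ≤ t then (1:ℝ) else 0) - (if trunc M x ≤ t then 1 else 0)| ∂μ := by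
      apply bound _ ((hTm t).diff measurableSet_Iic)
      rintro x ⟨h1, h2⟩
      rw [if_neg (show ¬ x ≤ t from fun hh => h2 hh), if_pos (show trunc M x ≤ t from h1)]
      norm_num
    have bd2 : μ (Iic t \ {x | trunc M x ≤ t}) ≤ ∫⁻ x, ENNReal.ofReal
        |(if x ≤ t then (1:ℝ) else 0) - (if trunc M x ≤ t then 1 else 0)| ∂μ := by
      apply bound _ (measurableSet_Iic.diff (hTm t))
      rintro x ⟨h1, h2⟩
      rw [if_pos (show x ≤ t from h1), if_neg (show ¬ trunc M x ≤ t from h2)]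
      norm_num
    have key : ∀ (a b : Set ℝ), MeasurableSet a → MeasurableSet b →
        (μ b).toReal - (μ a).toReal ≤ (μ (b \ a)).toReal := by
      intro a b _ _
      have hle : μ b ≤ μ a + μ (b \ a) :=
        le_trans (measure_mono (fun x hx => by
          by_cases h : x ∈ a
          · exact Set.mem_union_left _ h
          · exact Set.mem_union_right _ ⟨hx, h⟩))
        (measure_union_le _ _)
      have := ENNReal.toReal_mono (by
        exact ENNReal.add_ne_top.2 ⟨measure_ne_top μ a, measure_ne_top μ (b \ a)⟩) hle
      rw [ENNReal.toReal_add (measure_ne_top μ a) (measure_ne_top μ (b \ a))] at this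
      linarith
    rcases le_total (F' t) (F t) with hle | hle
    · rw [abs_of_nonpos (by linarith), neg_sub]
      have : F t - F' t ≤ (μ (Iic t \ {x | trunc M x ≤ t})).toReal := by
        have := key {x | trunc M x ≤ t} (Iic t) (hTm t) measurableSet_Iic
        simp only [hF, hF'] at *
        rw [hT t]
        linarith
      calc ENNReal.ofReal (F t - F' t)
          ≤ ENNReal.ofReal ((μ (Iic t \ {x | trunc M x ≤ t})).toReal) :=
            ENNReal.ofReal_le_ofReal this
        _ = μ (Iic t \ {x | trunc M x ≤ t}) := ENNReal.ofReal_toReal (measure_ne_top _ _)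
        _ ≤ _ := bd2
    · rw [abs_of_nonneg (by linarith)]
      have : F' t - F t ≤ (μ ({x | trunc M x ≤ t} \ Iic t)).toReal := by
        have := key (Iic t) {x | trunc M x ≤ t} measurableSet_Iic (hTm t)
        simp only [hF, hF'] at *
        rw [hT t]
        linarith
      calc ENNReal.ofReal (F' t - F t)
          ≤ ENNReal.ofReal ((μ ({x | trunc M x ≤ t} \ Iic t)).toReal) :=
            ENNReal.ofReal_le_ofReal this
        _ = μ ({x | trunc M x ≤ t} \ Iic t) := ENNReal.ofReal_toReal (measure_ne_top _ _)
        _ ≤ _ := bd1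
  have h2 : ∀ t : ℝ, |Fk t - Ek t| ≤ (1/(k:ℝ)) * ∑ j ∈ Finset.Icc 1 k,
      |(if X j ω ≤ t then (1:ℝ) else 0) - (if trunc M (X j ω) ≤ t then 1 else 0)| := by
    intro t
    rw [hFk_eq t]
    simp only [hEk]
    rw [← mul_sub, ← Finset.sum_sub_distrib, abs_mul, abs_of_nonneg (by positivity : (0:ℝ) ≤ 1/(k:ℝ))]
    exact mul_le_mul_of_nonneg_left (Finset.abs_sum_le_sum_abs _ _) (by positivity)
  have m3 : Measurable (fun t => ∫⁻ x, ENNReal.ofReal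
      |(if x ≤ t then (1:ℝ) else 0) - (if trunc M x ≤ t then 1 else 0)| ∂μ) :=
    Measurable.lintegral_prod_right' (f := fun p : ℝ × ℝ => ENNReal.ofReal
      |(if p.2 ≤ p.1 then (1:ℝ) else 0) - (if trunc M p.2 ≤ p.1 then 1 else 0)|) hUm
  have m1 : Measurable (fun t => ENNReal.ofReal ((1/(k:ℝ)) * ∑ j ∈ Finset.Icc 1 k,
      |(if X j ω ≤ t then (1:ℝ) else 0) - (if trunc M (X j ω) ≤ t then 1 else 0)|)) := by
    apply ENNReal.measurable_ofReal.comp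
    apply Measurable.const_mul
    exact Finset.measurable_sum _ (fun j _ => Measurable.abs (Measurable.sub
      (Measurable.ite (measurableSet_le measurable_const measurable_id)
        measurable_const measurable_const)
      (Measurable.ite (measurableSet_le measurable_const measurable_id)
        measurable_const measurable_const)))
  have m2 : Measurable (fun t => ENNReal.ofReal |Ek t - F' t|) :=
    ENNReal.measurable_ofReal.comp (hEkmeas.sub hF'meas).abs
  have hmain : (∫⁻ t, ENNReal.ofReal |Fk t - F t|) ≤ L1 + L2 + L3 := by
    have ptwise : ∀ t, ENNReal.ofReal |Fk t - F t| ≤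
        ENNReal.ofReal ((1/(k:ℝ)) * ∑ j ∈ Finset.Icc 1 k,
          |(if X j ω ≤ t then (1:ℝ) else 0) - (if trunc M (X j ω) ≤ t then 1 else 0)|)
        + ENNReal.ofReal |Ek t - F' t|
        + (∫⁻ x, ENNReal.ofReal
            |(if x ≤ t then (1:ℝ) else 0) - (if trunc M x ≤ t then 1 else 0)| ∂μ) := by
      intro t
      have tri : |Fk t - F t| ≤ |Fk t - Ek t| + |Ek t - F' t| + |F' t - F t| := by
        calc |Fk t - F t| ≤ |Fk t - F' t| + |F' t - F t| := abs_sub_le _ _ _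
          _ ≤ (|Fk t - Ek t| + |Ek t - F' t|) + |F' t - F t| :=
              add_le_add (abs_sub_le _ _ _) le_rfl
      calc ENNReal.ofReal |Fk t - F t|
          ≤ ENNReal.ofReal ((|Fk t - Ek t| + |Ek t - F' t|) + |F' t - F t|) :=
            ENNReal.ofReal_le_ofReal (by linarith)
        _ ≤ ENNReal.ofReal (|Fk t - Ek t| + |Ek t - F' t|) + ENNReal.ofReal |F' t - F t| :=
            ENNReal.ofReal_add_le
        _ ≤ (ENNReal.ofReal |Fk t - Ek t| + ENNReal.ofReal |Ek t - F' t|)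
            + ENNReal.ofReal |F' t - F t| := add_le_add ENNReal.ofReal_add_le le_rfl
        _ ≤ _ := add_le_add (add_le_add (ENNReal.ofReal_le_ofReal (h2 t)) le_rfl) (h3 t)
    calc (∫⁻ t, ENNReal.ofReal |Fk t - F t|) ≤ ∫⁻ t,
        (ENNReal.ofReal ((1/(k:ℝ)) * ∑ j ∈ Finset.Icc 1 k,
          |(if X j ω ≤ t then (1:ℝ) else 0) - (if trunc M (X j ω) ≤ t then 1 else 0)|)
        + ENNReal.ofReal |Ek t - F' t|
        + (∫⁻ x, ENNReal.ofReal
            |(if x ≤ t then (1:ℝ) else 0) - (if trunc M x ≤ t then 1 else 0)| ∂μ)) :=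
          lintegral_mono ptwise
      _ = L1 + L2 + L3 := by
          rw [lintegral_add_left (show Measurable (fun t => ENNReal.ofReal ((1/(k:ℝ)) * ∑ j ∈ Finset.Icc 1 k,
              |(if X j ω ≤ t then (1:ℝ) else 0) - (if trunc M (X j ω) ≤ t then 1 else 0)|)
              + ENNReal.ofReal |Ek t - F' t|) from m1.add m2), lintegral_add_left m1]
  have hW1 : W1 (empiricalMeasure k X ω) μ ≤
      (∫⁻ t, ENNReal.ofReal |Fk t - F t|).toReal := W1_le_lintegral_cdf _ _
  have hL1_ne : L1 ≠ ⊤ := by rw [hL1_eq]; exact ENNReal.ofReal_ne_top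
  have hsum_ne : L1 + L2 + L3 ≠ ⊤ := by
    simp [ENNReal.add_ne_top, hL1_ne, hL2_ne, hL3_ne]
  calc W1 (empiricalMeasure k X ω) μ ≤ (∫⁻ t, ENNReal.ofReal |Fk t - F t|).toReal := hW1
    _ ≤ (L1 + L2 + L3).toReal := ENNReal.toReal_mono hsum_ne hmain
    _ = L1.toReal + L2.toReal + L3.toReal := by
        rw [ENNReal.toReal_add (by simp [ENNReal.add_ne_top, hL1_ne, hL2_ne]) hL3_ne,
          ENNReal.toReal_add hL1_ne hL2_ne]
    _ ≤ _ := by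
        rw [hL2_toReal, hL3_toReal, hL1_eq, ENNReal.toReal_ofReal (by positivity)]
        rw [hEk, hF']
        apply le_of_eq
        ring

/-- Truncation decomposition of `max_{1 ≤ k ≤ n} k W₁(μ_k, μ)`:
it is bounded by the maximal deviation of the empirical distribution function of the
truncated variables, plus the sum of the truncation remainders and their expectations. -/
theorem max_kW1_le_truncated {Ω : Type*} [MeasurableSpace Ω] (P : Measure Ω)
    [IsProbabilityMeasure P] (X : ℕ → Ω → ℝ) (hmeas : ∀ i, Measurable (X i))
    (μ : Measure ℝ) (hid : ∀ i, Measure.map (X i) P = μ)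
    (hint : Integrable (fun x => x) μ) (M : ℝ) (hM : 0 < M) (n : ℕ) :
    ∀ᵐ ω ∂P,
      (⨆ k ∈ Finset.Icc 1 n, (k : ℝ) * W1 (empiricalMeasure k X ω) μ) ≤
        (⨆ k ∈ Finset.Icc 1 n, (k : ℝ) *
          ∫ t, |(1 / (k : ℝ)) * ∑ j ∈ Finset.Icc 1 k,
              (if trunc M (X j ω) ≤ t then (1 : ℝ) else 0)
            - ((μ.map (fun x => trunc M x)) (Set.Iic t)).toReal|)
        + ∑ i ∈ Finset.Icc 1 n,
            (|X i ω - trunc M (X i ω)| + ∫ ω', |X i ω' - trunc M (X i ω')| ∂P) := by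
  classical
  haveI hμprob : IsProbabilityMeasure μ := by
    rw [← hid 1]
    exact Measure.isProbabilityMeasure_map (hmeas 1).aemeasurable
  have hEM_eq : ∀ i : ℕ, ∫ ω', |X i ω' - trunc M (X i ω')| ∂P = ∫ x, |x - trunc M x| ∂μ := by
    intro i
    rw [← hid i, integral_map (f := fun x => |x - trunc M x|) (hmeas i).aemeasurable
      ((continuous_id.sub (continuous_trunc M)).abs.aestronglyMeasurable)]
  have hEMnn : 0 ≤ ∫ x, |x - trunc M x| ∂μ := integral_nonneg fun x => abs_nonneg _
  refine Filter.Eventually.of_forall (fun ω => ?_)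
  set g : ℕ → ℝ := fun k => ⨆ _ : k ∈ Finset.Icc 1 n, (k : ℝ) *
      ∫ t, |(1 / (k : ℝ)) * ∑ j ∈ Finset.Icc 1 k,
          (if trunc M (X j ω) ≤ t then (1 : ℝ) else 0)
        - ((μ.map (fun x => trunc M x)) (Set.Iic t)).toReal| with hg
  set B : ℝ := ∑ i ∈ Finset.Icc 1 n,
      (|X i ω - trunc M (X i ω)| + ∫ ω', |X i ω' - trunc M (X i ω')| ∂P) with hB
  have hA0 : 0 ≤ ⨆ k, g k := by
    apply Real.iSup_nonneg
    intro k
    apply Real.iSup_nonneg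
    intro _
    exact mul_nonneg (Nat.cast_nonneg k) (integral_nonneg fun t => abs_nonneg _)
  have hB0 : 0 ≤ B := Finset.sum_nonneg fun i _ =>
    add_nonneg (abs_nonneg _) (integral_nonneg fun ω' => abs_nonneg _)
  have hbdd : BddAbove (Set.range g) := by
    apply Set.Finite.bddAbove
    apply Set.Finite.subset (((Finset.Icc 1 n).finite_toSet.image g).insert 0)
    rintro _ ⟨k, rfl⟩
    by_cases hk : k ∈ Finset.Icc 1 n
    · exact Set.mem_insert_of_mem _ ⟨k, hk, rfl⟩
    · haveI : IsEmpty (k ∈ Finset.Icc 1 n) := isEmpty_Prop.2 hk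
      rw [hg]
      simp only [Real.iSup_of_isEmpty]
      exact Set.mem_insert _ _
  have hkey : ∀ k ∈ Finset.Icc 1 n, (k : ℝ) * W1 (empiricalMeasure k X ω) μ ≤
      (⨆ k, g k) + B := by
    intro k hk
    obtain ⟨hk1, hkn⟩ := Finset.mem_Icc.1 hk
    have hW := key_bound μ hint hM hk1 X ω
    have hknz : ((k:ℝ)) ≠ 0 := by
      exact_mod_cast (Nat.pos_of_ne_zero (by omega)).ne'
    calc (k : ℝ) * W1 (empiricalMeasure k X ω) μ
        ≤ (k : ℝ) * ((∫ t, |(1 / (k : ℝ)) * ∑ j ∈ Finset.Icc 1 k,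
              (if trunc M (X j ω) ≤ t then (1 : ℝ) else 0)
            - ((μ.map (fun x => trunc M x)) (Set.Iic t)).toReal|)
          + (1/(k:ℝ)) * ∑ j ∈ Finset.Icc 1 k, |X j ω - trunc M (X j ω)|
          + ∫ x, |x - trunc M x| ∂μ) := mul_le_mul_of_nonneg_left hW (Nat.cast_nonneg k)
      _ = ((k : ℝ) * ∫ t, |(1 / (k : ℝ)) * ∑ j ∈ Finset.Icc 1 k,
              (if trunc M (X j ω) ≤ t then (1 : ℝ) else 0)
            - ((μ.map (fun x => trunc M x)) (Set.Iic t)).toReal|)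
          + ((∑ j ∈ Finset.Icc 1 k, |X j ω - trunc M (X j ω)|)
            + (k : ℝ) * ∫ x, |x - trunc M x| ∂μ) := by
          field_simp
          ring
      _ ≤ (⨆ k, g k) + B := by
          apply add_le_add
          · have h1 : (k : ℝ) * (∫ t, |(1 / (k : ℝ)) * ∑ j ∈ Finset.Icc 1 k,
                (if trunc M (X j ω) ≤ t then (1 : ℝ) else 0)
              - ((μ.map (fun x => trunc M x)) (Set.Iic t)).toReal|) = g k := by
              haveI : Nonempty (k ∈ Finset.Icc 1 n) := ⟨hk⟩
              rw [hg]
              exact (ciSup_const).symm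
            rw [h1]
            exact le_ciSup hbdd k
          · have h2 : (k : ℝ) * ∫ x, |x - trunc M x| ∂μ
                = ∑ _j ∈ Finset.Icc 1 k, ∫ x, |x - trunc M x| ∂μ := by
              rw [Finset.sum_const, Nat.card_Icc, Nat.add_sub_cancel, nsmul_eq_mul]
            rw [h2, ← Finset.sum_add_distrib, hB]
            have hBalt : B = ∑ i ∈ Finset.Icc 1 n,
                (|X i ω - trunc M (X i ω)| + ∫ x, |x - trunc M x| ∂μ) :=
              Finset.sum_congr rfl (fun i _ => by rw [hEM_eq i])
            rw [← hB, hBalt]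
            apply Finset.sum_le_sum_of_subset_of_nonneg
              (Finset.Icc_subset_Icc_right hkn)
            intro i _ _
            exact add_nonneg (abs_nonneg _) hEMnn
  calc (⨆ k ∈ Finset.Icc 1 n, (k : ℝ) * W1 (empiricalMeasure k X ω) μ)
      ≤ (⨆ k, g k) + B := by
        apply Real.iSup_le _ (add_nonneg hA0 hB0)
        intro k
        by_cases hk : k ∈ Finset.Icc 1 n
        · exact Real.iSup_le (fun hkk => hkey k hkk) (add_nonneg hA0 hB0)
        · haveI : IsEmpty (k ∈ Finset.Icc 1 n) := isEmpty_Prop.2 hk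
          rw [Real.iSup_of_isEmpty]
          exact add_nonneg hA0 hB0
    _ = _ := by rw [hg, hB]
end

section
/- Let X be an integrable nonnegative real random variable with tail function H(t) = P(X > t), and let Q be the càdlàg inverse of H, Q(u) = inf{t ≥ 0 : H(t) ≤ u}. Then for any v ∈ (0,1], ∫_{Q(v)}^∞ H(t) dt ≤ ∫_0^v Q(u) du. -/
open MeasureTheory

/-- For an integrable nonnegative random variable with tail function `H` and
generalized inverse `Q`, one has `∫_{Q(v)}^∞ H(t) dt ≤ ∫_0^v Q(u) du`. -/
theorem integral_tail_le_integral_quantile {Ω : Type*} [MeasurableSpace Ω]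
    (P : Measure Ω) [IsProbabilityMeasure P] (X : Ω → ℝ) (hXm : Measurable X)
    (hX0 : ∀ ω, 0 ≤ X ω) (hXint : Integrable X P)
    (H Q : ℝ → ℝ)
    (hH : ∀ t, H t = (P {ω | t < X ω}).toReal)
    (hQ : ∀ u, Q u = sInf {t | 0 ≤ t ∧ H t ≤ u})
    (v : ℝ) (hv : v ∈ Set.Ioc (0 : ℝ) 1) :
    ∫ t in Set.Ioi (Q v), H t ≤ ∫ u in Set.Ioc 0 v, Q u := by
  classical
  obtain ⟨hv0, hv1⟩ := hv
  -- basic properties of H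
  have hHnn : ∀ t, 0 ≤ H t := fun t => by rw [hH]; exact ENNReal.toReal_nonneg
  have hHanti : Antitone H := by
    intro s t hst
    rw [hH, hH]
    exact ENNReal.toReal_mono (measure_ne_top _ _)
      (measure_mono fun ω hω => lt_of_le_of_lt hst hω)
  have hHm : Measurable H := hHanti.measurable
  -- the sets defining Q
  set S : ℝ → Set ℝ := fun u => {t | 0 ≤ t ∧ H t ≤ u} with hS
  have hSbdd : ∀ u, BddBelow (S u) := fun u => ⟨0, fun x hx => hx.1⟩
  -- S u is nonempty for u > 0, since H tends to 0 at infinity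
  have hSne : ∀ u, 0 < u → (S u).Nonempty := by
    intro u hu
    have h_empty : ⋂ n : ℕ, {ω | (n : ℝ) < X ω} = ∅ := by
      ext ω
      simp only [Set.mem_iInter, Set.mem_setOf_eq, Set.mem_empty_iff_false, iff_false, not_forall,
        not_lt]
      obtain ⟨n, hn⟩ := exists_nat_gt (X ω)
      exact ⟨n, hn.le⟩
    have htend : Filter.Tendsto (fun n : ℕ => P {ω | (n : ℝ) < X ω}) Filter.atTop (nhds 0) := by
      have := tendsto_measure_iInter_atTop (μ := P) (s := fun n : ℕ => {ω | (n : ℝ) < X ω})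
        (fun n => (hXm measurableSet_Ioi).nullMeasurableSet) ?_ ⟨0, measure_ne_top _ _⟩
      · rwa [h_empty, measure_empty] at this
      · intro m n hmn
        intro ω hω
        simp only [Set.mem_setOf_eq] at hω ⊢
        exact lt_of_le_of_lt (Nat.cast_le.mpr hmn) hω
    have htend' : Filter.Tendsto (fun n : ℕ => H (n : ℝ)) Filter.atTop (nhds 0) := by
      have hcont := (ENNReal.tendsto_toReal (a := (0 : ENNReal)) (by simp)).comp htend
      simpa [hH, Function.comp_def] using hcont
    obtain ⟨n, hn⟩ := (htend'.eventually_lt_const hu).exists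
    exact ⟨(n : ℝ), n.cast_nonneg, hn.le⟩
  have hQnn : ∀ u, 0 ≤ Q u := by
    intro u; rw [hQ]
    exact Real.sInf_nonneg fun x hx => hx.1
  -- key inequalities relating H and Q
  have hHQv : ∀ t, Q v < t → H t ≤ v := by
    intro t ht
    rw [hQ] at ht
    obtain ⟨s, hs, hst⟩ := exists_lt_of_csInf_lt (hSne v hv0) ht
    exact le_trans (hHanti hst.le) hs.2
  have hQge : ∀ t u, 0 ≤ t → 0 < u → u < H t → t ≤ Q u := by
    intro t u ht hu hlt
    rw [hQ]
    refine le_csInf (hSne u hu) fun s hs => ?_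
    by_contra hh
    push_neg at hh
    exact absurd (le_trans (hHanti hh.le) hs.2) (not_le.mpr hlt)
  have hQlt : ∀ u t, 0 ≤ t → t < Q u → u < H t := by
    intro u t ht hlt
    by_contra hh
    push_neg at hh
    have : Q u ≤ t := by rw [hQ]; exact csInf_le (hSbdd u) ⟨ht, hh⟩
    exact absurd hlt (not_lt.mpr this)
  have hQanti : AntitoneOn Q (Set.Ioi 0) := by
    intro a ha b hb hab
    rw [hQ, hQ]
    exact csInf_le_csInf (hSbdd b) (hSne a ha) fun x hx => ⟨hx.1, le_trans hx.2 hab⟩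
  have hQm : AEMeasurable Q (volume.restrict (Set.Ioc 0 v)) :=
    aemeasurable_restrict_of_antitoneOn measurableSet_Ioc
      (hQanti.mono Set.Ioc_subset_Ioi_self)
  -- the first product set
  set T : Set (ℝ × ℝ) := {p | Q v < p.1 ∧ p.2 < H p.1 ∧ 0 < p.2 ∧ p.2 ≤ v} with hT
  have hTm : MeasurableSet T := by
    refine MeasurableSet.inter (measurableSet_lt measurable_const measurable_fst)
      (MeasurableSet.inter (measurableSet_lt measurable_snd (hHm.comp measurable_fst))
        (MeasurableSet.inter (measurableSet_lt measurable_const measurable_snd)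
          (measurableSet_le measurable_snd measurable_const)))
  -- first computation of the product measure: as the tail integral of H
  have hA1 : (volume.prod volume) T = ∫⁻ t in Set.Ioi (Q v), ENNReal.ofReal (H t) := by
    rw [Measure.prod_apply hTm]
    rw [← lintegral_indicator measurableSet_Ioi _]
    refine lintegral_congr fun t => ?_
    by_cases ht : Q v < t
    · have hsec : Prod.mk t ⁻¹' T = Set.Ioo 0 (H t) := by
        ext u
        simp only [hT, Set.mem_preimage, Set.mem_setOf_eq, Set.mem_Ioo]
        constructor
        · rintro ⟨-, h1, h2, -⟩; exact ⟨h2, h1⟩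
        · rintro ⟨h1, h2⟩; exact ⟨ht, h2, h1, le_trans h2.le (hHQv t ht)⟩
      have ht' : t ∈ Set.Ioi (Q v) := ht
      rw [hsec, Real.volume_Ioo, Set.indicator_of_mem ht', sub_zero]
    · have hsec : Prod.mk t ⁻¹' T = ∅ := by
        ext u
        simp only [hT, Set.mem_preimage, Set.mem_setOf_eq, Set.mem_empty_iff_false, iff_false]
        rintro ⟨h, -⟩; exact ht h
      have ht' : t ∉ Set.Ioi (Q v) := ht
      rw [hsec, measure_empty, Set.indicator_of_notMem ht']
  -- second computation: bounded by the integral of Q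
  have hA2 : (volume.prod volume) T ≤ ∫⁻ u in Set.Ioc 0 v, ENNReal.ofReal (Q u) := by
    rw [Measure.prod_apply_symm hTm, ← lintegral_indicator measurableSet_Ioc _]
    refine lintegral_mono fun u => ?_
    by_cases hu : u ∈ Set.Ioc 0 v
    · have hsub : (fun t => (t, u)) ⁻¹' T ⊆ Set.Ioc (Q v) (Q u) := by
        rintro t ⟨h1, h2, h3, -⟩
        exact ⟨h1, hQge t u (le_trans (hQnn v) h1.le) h3 h2⟩
      calc volume ((fun t => (t, u)) ⁻¹' T) ≤ volume (Set.Ioc (Q v) (Q u)) :=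
            measure_mono hsub
        _ = ENNReal.ofReal (Q u - Q v) := Real.volume_Ioc
        _ ≤ ENNReal.ofReal (Q u) := ENNReal.ofReal_le_ofReal (sub_le_self _ (hQnn v))
        _ = Set.indicator (Set.Ioc 0 v) (fun u => ENNReal.ofReal (Q u)) u := by
            rw [Set.indicator_of_mem hu]
    · have hsec : (fun t => (t, u)) ⁻¹' T = ∅ := by
        ext t
        simp only [hT, Set.mem_preimage, Set.mem_setOf_eq, Set.mem_empty_iff_false, iff_false]
        rintro ⟨-, -, h3, h4⟩; exact hu ⟨h3, h4⟩
      rw [hsec, measure_empty]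
      exact zero_le
  -- finiteness of the right-hand side lintegral
  have hBfin : (∫⁻ u in Set.Ioc 0 v, ENNReal.ofReal (Q u)) < ⊤ := by
    set T2 : Set (ℝ × ℝ) := {p | (0 < p.1 ∧ p.1 ≤ v) ∧ 0 ≤ p.2 ∧ p.1 < H p.2} with hT2
    have hT2m : MeasurableSet T2 := by
      refine MeasurableSet.inter (MeasurableSet.inter
        (measurableSet_lt measurable_const measurable_fst)
        (measurableSet_le measurable_fst measurable_const))
        (MeasurableSet.inter (measurableSet_le measurable_const measurable_snd)
          (measurableSet_lt measurable_fst (hHm.comp measurable_snd)))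
    have hle1 : (∫⁻ u in Set.Ioc 0 v, ENNReal.ofReal (Q u)) ≤ (volume.prod volume) T2 := by
      rw [Measure.prod_apply hT2m, ← lintegral_indicator measurableSet_Ioc _]
      refine lintegral_mono fun u => ?_
      by_cases hu : u ∈ Set.Ioc 0 v
      · have hsub : Set.Ico 0 (Q u) ⊆ Prod.mk u ⁻¹' T2 := by
          rintro t ⟨h1, h2⟩
          exact ⟨⟨hu.1, hu.2⟩, h1, hQlt u t h1 h2⟩
        calc Set.indicator (Set.Ioc 0 v) (fun u => ENNReal.ofReal (Q u)) u
            = ENNReal.ofReal (Q u) := Set.indicator_of_mem hu _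
          _ = volume (Set.Ico 0 (Q u)) := by rw [Real.volume_Ico, sub_zero]
          _ ≤ volume (Prod.mk u ⁻¹' T2) := measure_mono hsub
      · rw [Set.indicator_of_notMem hu]
        exact zero_le
    have hle2 : (volume.prod volume) T2 ≤ ∫⁻ t in Set.Ioi 0, P {ω | t < X ω} := by
      have h1 : (volume.prod volume) T2 ≤ ∫⁻ t in Set.Ici 0, P {ω | t < X ω} := by
        rw [Measure.prod_apply_symm hT2m, ← lintegral_indicator measurableSet_Ici _]
        refine lintegral_mono fun t => ?_
        by_cases ht : t ∈ Set.Ici 0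
        · have hsub : (fun u => (u, t)) ⁻¹' T2 ⊆ Set.Ioo 0 (H t) := by
            rintro u ⟨⟨h1, -⟩, -, h3⟩
            exact ⟨h1, h3⟩
          calc volume ((fun u => (u, t)) ⁻¹' T2) ≤ volume (Set.Ioo 0 (H t)) :=
                measure_mono hsub
            _ = ENNReal.ofReal (H t) := by rw [Real.volume_Ioo, sub_zero]
            _ = P {ω | t < X ω} := by rw [hH]; exact ENNReal.ofReal_toReal (measure_ne_top _ _)
            _ = Set.indicator (Set.Ici 0) (fun t => P {ω | t < X ω}) t := by
                rw [Set.indicator_of_mem ht]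
        · have hsec : (fun u => (u, t)) ⁻¹' T2 = ∅ := by
            ext u
            simp only [hT2, Set.mem_preimage, Set.mem_setOf_eq, Set.mem_empty_iff_false, iff_false]
            rintro ⟨-, h2, -⟩; exact ht h2
          rw [hsec, measure_empty, Set.indicator_of_notMem ht]
      have h2 : (∫⁻ t in Set.Ici 0, P {ω | t < X ω})
          = ∫⁻ t in Set.Ioi 0, P {ω | t < X ω} := by
        rw [← Set.Ioi_union_left, lintegral_union (measurableSet_singleton 0)]
        · simp
        · simp [Set.disjoint_singleton_right]
      rw [← h2]; exact h1
    have hlayer : (∫⁻ t in Set.Ioi 0, P {ω | t < X ω}) = ∫⁻ ω, ENNReal.ofReal (X ω) ∂P :=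
      (lintegral_eq_lintegral_meas_lt P (Filter.Eventually.of_forall hX0)
        hXm.aemeasurable).symm
    have hfin : (∫⁻ ω, ENNReal.ofReal (X ω) ∂P) < ⊤ := by
      have := hXint.hasFiniteIntegral
      rw [HasFiniteIntegral] at this
      refine lt_of_le_of_lt (le_of_eq ?_) this
      refine lintegral_congr fun ω => ?_
      rw [← ofReal_norm_eq_enorm, Real.norm_of_nonneg (hX0 ω)]
    exact lt_of_le_of_lt hle1 (lt_of_le_of_lt hle2 (hlayer ▸ hfin))
  -- put everything together
  have hL : ∫ t in Set.Ioi (Q v), H t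
      = (∫⁻ t in Set.Ioi (Q v), ENNReal.ofReal (H t)).toReal :=
    integral_eq_lintegral_of_nonneg_ae (Filter.Eventually.of_forall fun t => hHnn t)
      hHm.aestronglyMeasurable.restrict
  have hR : ∫ u in Set.Ioc 0 v, Q u
      = (∫⁻ u in Set.Ioc 0 v, ENNReal.ofReal (Q u)).toReal :=
    integral_eq_lintegral_of_nonneg_ae (Filter.Eventually.of_forall fun u => hQnn u)
      hQm.aestronglyMeasurable
  rw [hL, hR]
  exact ENNReal.toReal_mono hBfin.ne (hA1 ▸ hA2)
end

section
/- Let (X_i)_{i∈ℤ} be a strictly stationary sequence of real random variables with strong mixing coefficients α(k), and let X_i' be the truncation of X_i at level M (i.e., X_i' = (X_i ∧ M) ∨ (−M)). Then for every q ≥ 1 and every t ∈ ℝ, Var(∑_{i=1}^q 1_{X_i' ≤ t}) ≤ 8 q ∑_{k=0}^{q−1} min(α(k), H(t) ) for t ≥ 0, where H(t) = P(|X₀| > t). -/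
open MeasureTheory

/-- The σ-algebra of the past, `σ(X_i, i ≤ 0)`. -/
def pastSigma {Ω : Type*} (X : ℤ → Ω → ℝ) : MeasurableSpace Ω :=
  ⨆ i : {i : ℤ // i ≤ 0}, MeasurableSpace.comap (X i.1) (inferInstance : MeasurableSpace ℝ)

/-- The σ-algebra of the future, `σ(X_i, i ≥ k)`. -/
def futureSigma {Ω : Type*} (X : ℤ → Ω → ℝ) (k : ℤ) : MeasurableSpace Ω :=
  ⨆ i : {i : ℤ // k ≤ i}, MeasurableSpace.comap (X i.1) (inferInstance : MeasurableSpace ℝ)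

/-- Rosenblatt's strong mixing coefficients `α(k)`. -/
noncomputable def alphaMix {Ω : Type*} [MeasurableSpace Ω] (P : Measure Ω)
    (X : ℤ → Ω → ℝ) (k : ℕ) : ℝ :=
  sSup {r | ∃ A B : Set Ω, MeasurableSet[pastSigma X] A ∧
    MeasurableSet[futureSigma X k] B ∧
    r = |(P (A ∩ B)).toReal - (P A).toReal * (P B).toReal|}

/-- Strict stationarity: the finite dimensional distributions are shift invariant. -/
def IsStrictlyStationary {Ω : Type*} [MeasurableSpace Ω] (P : Measure Ω)
    (X : ℤ → Ω → ℝ) : Prop :=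
  ∀ (m : ℕ) (ind : Fin m → ℤ) (h : ℤ),
    Measure.map (fun ω j => X (ind j + h) ω) P = Measure.map (fun ω j => X (ind j) ω) P

lemma trunc_measurable (M : ℝ) : Measurable (trunc M) :=
  (measurable_id.min measurable_const).max measurable_const

lemma toReal_prob_le_one {Ω : Type*} [MeasurableSpace Ω] (P : Measure Ω)
    [IsProbabilityMeasure P] (s : Set Ω) : (P s).toReal ≤ 1 := by
  have h : P s ≤ 1 := prob_le_one
  have := ENNReal.toReal_mono (by norm_num) h
  simpa using this

/-- Variance bound for partial sums of truncated indicators in terms of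
the strong mixing coefficients and the tail function `H(t) = P(|X₀| > t)`. -/
theorem variance_indicator_le_mixing {Ω : Type*} [MeasurableSpace Ω]
    (P : Measure Ω) [IsProbabilityMeasure P] (X : ℤ → Ω → ℝ)
    (hmeas : ∀ i, Measurable (X i)) (hstat : IsStrictlyStationary P X)
    (M : ℝ) (hM : 0 < M) (q : ℕ) (hq : 1 ≤ q) (t : ℝ) (ht : 0 ≤ t) :
    ProbabilityTheory.variance
        (fun ω => ∑ i ∈ Finset.Icc (1 : ℤ) q,
          (if trunc M (X i ω) ≤ t then (1 : ℝ) else 0)) P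
      ≤ 8 * q * ∑ k ∈ Finset.range q,
          min (alphaMix P X k) ((P {ω | t < |X 0 ω|}).toReal) := by
  classical
  set H : ℝ := (P {ω | t < |X 0 ω|}).toReal with hHdef
  set A : ℤ → Set Ω := fun i => {ω | trunc M (X i ω) ≤ t} with hAdef
  have hAmeas : ∀ i, MeasurableSet (A i) := fun i =>
    (trunc_measurable M).comp (hmeas i) measurableSet_Iic
  set I : Finset ℤ := Finset.Icc (1 : ℤ) q with hIdef
  -- the summand functions are indicators
  have hY : ∀ i : ℤ, (fun ω => if trunc M (X i ω) ≤ t then (1 : ℝ) else 0)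
      = (A i).indicator 1 := by
    intro i; funext ω; simp [Set.indicator_apply, hAdef, Set.mem_setOf_eq]
  -- basic integral facts
  have hint : ∀ s : Set Ω, MeasurableSet s → Integrable (s.indicator (1 : Ω → ℝ)) P :=
    fun s hs => (integrable_const (1 : ℝ)).indicator hs
  -- marginal stationarity
  have hmarg : ∀ i : ℤ, P (A i) = P (A 0) := by
    intro i
    have h := hstat 1 (fun _ => 0) i
    have hm1 : Measurable (fun ω (_ : Fin 1) => X ((0 : ℤ) + i) ω) :=
      measurable_pi_lambda _ fun _ => hmeas _
    have hm2 : Measurable (fun ω (_ : Fin 1) => X (0 : ℤ) ω) :=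
      measurable_pi_lambda _ fun _ => hmeas _
    have hs : MeasurableSet {v : Fin 1 → ℝ | trunc M (v 0) ≤ t} :=
      ((trunc_measurable M).comp (measurable_pi_apply 0)) measurableSet_Iic
    have := congrArg (fun μ : Measure (Fin 1 → ℝ) => μ {v | trunc M (v 0) ≤ t}) h
    simp only [Measure.map_apply hm1 hs, Measure.map_apply hm2 hs] at this
    simpa [hAdef, Set.preimage_setOf_eq, zero_add] using this
  -- pair stationarity
  have hpair : ∀ i j : ℤ, P (A i ∩ A j) = P (A 0 ∩ A (j - i)) := by
    intro i j
    have h := hstat 2 ![0, j - i] i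
    have hm1 : Measurable (fun ω (m : Fin 2) => X (![0, j - i] m + i) ω) :=
      measurable_pi_lambda _ fun _ => hmeas _
    have hm2 : Measurable (fun ω (m : Fin 2) => X (![0, j - i] m) ω) :=
      measurable_pi_lambda _ fun _ => hmeas _
    have hs : MeasurableSet {v : Fin 2 → ℝ | trunc M (v 0) ≤ t ∧ trunc M (v 1) ≤ t} := by
      exact (((trunc_measurable M).comp (measurable_pi_apply 0)) measurableSet_Iic).inter
        (((trunc_measurable M).comp (measurable_pi_apply 1)) measurableSet_Iic)
    have hcong := congrArg
      (fun μ : Measure (Fin 2 → ℝ) => μ {v | trunc M (v 0) ≤ t ∧ trunc M (v 1) ≤ t}) h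
    simp only [Measure.map_apply hm1 hs, Measure.map_apply hm2 hs] at hcong
    have e1 : (fun ω (m : Fin 2) => X (![0, j - i] m + i) ω) ⁻¹'
        {v : Fin 2 → ℝ | trunc M (v 0) ≤ t ∧ trunc M (v 1) ≤ t} = A i ∩ A j := by
      ext ω
      simp [hAdef, Set.mem_setOf_eq, Matrix.cons_val_zero, Matrix.cons_val_one,
        Matrix.head_cons, zero_add, sub_add_cancel]
    have e2 : (fun ω (m : Fin 2) => X (![0, j - i] m) ω) ⁻¹'
        {v : Fin 2 → ℝ | trunc M (v 0) ≤ t ∧ trunc M (v 1) ≤ t} = A 0 ∩ A (j - i) := by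
      ext ω
      simp [hAdef, Set.mem_setOf_eq, Matrix.cons_val_zero, Matrix.cons_val_one,
        Matrix.head_cons]
    rw [e1, e2] at hcong
    exact hcong
  -- bddAbove of the alpha sets
  have hbdd : ∀ k : ℕ, BddAbove {r | ∃ A B : Set Ω, @MeasurableSet Ω (pastSigma X) A ∧
      @MeasurableSet Ω (futureSigma X k) B ∧
      r = |(P (A ∩ B)).toReal - (P A).toReal * (P B).toReal|} := by
    intro k
    refine ⟨1, ?_⟩
    rintro r ⟨A', B', -, -, rfl⟩
    have h1 := toReal_prob_le_one P (A' ∩ B')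
    have h2 := toReal_prob_le_one P A'
    have h3 := toReal_prob_le_one P B'
    have n1 : (0:ℝ) ≤ (P (A' ∩ B')).toReal := ENNReal.toReal_nonneg
    have n2 : (0:ℝ) ≤ (P A').toReal := ENNReal.toReal_nonneg
    have n3 : (0:ℝ) ≤ (P B').toReal := ENNReal.toReal_nonneg
    rw [abs_le]
    constructor <;> nlinarith
  have halpha_nonneg : ∀ k : ℕ, 0 ≤ alphaMix P X k := by
    intro k
    exact le_csSup (hbdd k) ⟨∅, ∅, @MeasurableSet.empty _ (pastSigma X), @MeasurableSet.empty _ (futureSigma X k), by simp⟩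
  have hHnn : 0 ≤ H := ENNReal.toReal_nonneg
  -- measurability in past/future sigma algebras
  have hpast : MeasurableSet[pastSigma X] (A 0) := by
    have hc : MeasurableSet[MeasurableSpace.comap (X 0) inferInstance] (A 0) :=
      ⟨{x | trunc M x ≤ t}, (trunc_measurable M) measurableSet_Iic, rfl⟩
    exact le_iSup (fun i : {i : ℤ // i ≤ 0} =>
      MeasurableSpace.comap (X i.1) (inferInstance : MeasurableSpace ℝ)) ⟨0, le_refl 0⟩ _ hc
  have hfut : ∀ k : ℕ, MeasurableSet[futureSigma X k] (A k) := by
    intro k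
    have hc : MeasurableSet[MeasurableSpace.comap (X k) inferInstance] (A k) :=
      ⟨{x | trunc M x ≤ t}, (trunc_measurable M) measurableSet_Iic, rfl⟩
    exact le_iSup (fun i : {i : ℤ // (k : ℤ) ≤ i} =>
      MeasurableSpace.comap (X i.1) (inferInstance : MeasurableSpace ℝ)) ⟨k, le_refl _⟩ _ hc
  have hcov_alpha : ∀ k : ℕ,
      |(P (A 0 ∩ A k)).toReal - (P (A 0)).toReal * (P (A k)).toReal| ≤ alphaMix P X k :=
    fun k => le_csSup (hbdd k) ⟨A 0, A k, hpast, hfut k, rfl⟩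
  -- complement is inside the tail event
  have hcompl_sub : ∀ i : ℤ, (A i)ᶜ ⊆ {ω | t < |X i ω|} := by
    intro i ω hω
    simp only [hAdef, Set.mem_compl_iff, Set.mem_setOf_eq, not_le, trunc] at hω
    rcases lt_max_iff.mp hω with h | h
    · exact lt_of_lt_of_le (lt_min_iff.mp h).1 (le_abs_self _)
    · exact absurd h (by linarith)
  -- covariance bound by the tail H
  have hcov_H : ∀ k : ℕ,
      |(P (A 0 ∩ A k)).toReal - (P (A 0)).toReal * (P (A k)).toReal| ≤ H := by
    intro k
    set a := (P (A 0)).toReal with ha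
    set b := (P (A (k:ℤ))).toReal with hb
    set c := (P (A 0 ∩ A (k:ℤ))).toReal with hc
    set a' := (P ((A 0)ᶜ)).toReal with ha'
    set b' := (P ((A (k:ℤ))ᶜ)).toReal with hb'
    set c' := (P ((A 0)ᶜ ∩ (A (k:ℤ))ᶜ)).toReal with hc'
    set u := (P (A 0 ∪ A (k:ℤ))).toReal with hu
    have fin : ∀ s : Set Ω, P s ≠ ⊤ := fun s => measure_ne_top P s
    have e1 : a + a' = 1 := by
      have := prob_add_prob_compl (μ := P) (hAmeas 0)
      calc a + a' = (P (A 0) + P ((A 0)ᶜ)).toReal := (ENNReal.toReal_add (fin _) (fin _)).symm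
        _ = 1 := by rw [this]; simp
    have e2 : b + b' = 1 := by
      have := prob_add_prob_compl (μ := P) (hAmeas (k:ℤ))
      calc b + b' = (P (A (k:ℤ)) + P ((A (k:ℤ))ᶜ)).toReal :=
          (ENNReal.toReal_add (fin _) (fin _)).symm
        _ = 1 := by rw [this]; simp
    have e3 : u + c = a + b := by
      have := measure_union_add_inter (μ := P) (A 0) (hAmeas (k:ℤ))
      calc u + c = (P (A 0 ∪ A (k:ℤ)) + P (A 0 ∩ A (k:ℤ))).toReal :=
          (ENNReal.toReal_add (fin _) (fin _)).symm
        _ = (P (A 0) + P (A (k:ℤ))).toReal := by rw [this]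
        _ = a + b := ENNReal.toReal_add (fin _) (fin _)
    have e4 : u + c' = 1 := by
      have hcompl : (A 0)ᶜ ∩ (A (k:ℤ))ᶜ = (A 0 ∪ A (k:ℤ))ᶜ := (Set.compl_union _ _).symm
      have := prob_add_prob_compl (μ := P) ((hAmeas 0).union (hAmeas (k:ℤ)))
      calc u + c' = (P (A 0 ∪ A (k:ℤ)) + P ((A 0 ∪ A (k:ℤ))ᶜ)).toReal := by
            rw [hc', hcompl]; exact (ENNReal.toReal_add (fin _) (fin _)).symm
        _ = 1 := by rw [this]; simp
    have ea : a' = 1 - a := by linarith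
    have eb : b' = 1 - b := by linarith
    have ec : c' = 1 - a - b + c := by linarith
    have hid : c - a * b = c' - a' * b' := by rw [ea, eb, ec]; ring
    have hmono1 : c' ≤ a' := ENNReal.toReal_mono (fin _)
      (measure_mono (Set.inter_subset_left))
    have ha'H : a' ≤ H := by
      rw [ha', hHdef]
      exact ENNReal.toReal_mono (fin _) (measure_mono (hcompl_sub 0))
    have hb'le : b' ≤ 1 := toReal_prob_le_one P _
    have hnn : 0 ≤ c' := ENNReal.toReal_nonneg
    have hnna : 0 ≤ a' := ENNReal.toReal_nonneg
    have hnnb : 0 ≤ b' := ENNReal.toReal_nonneg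
    rw [hid, abs_le]
    constructor <;> nlinarith
  -- per pair covariance bound
  have hkey : ∀ i j : ℤ, i ≤ j →
      (P (A i ∩ A j)).toReal - (P (A i)).toReal * (P (A j)).toReal
        ≤ min (alphaMix P X (j - i).natAbs) H := by
    intro i j hij
    set k : ℕ := (j - i).natAbs with hk
    have hkz : (k : ℤ) = j - i := Int.natAbs_of_nonneg (by omega)
    have e1 : P (A i ∩ A j) = P (A 0 ∩ A (k : ℤ)) := by rw [hpair i j, hkz]
    have e2 : (P (A i)).toReal = (P (A 0)).toReal := by rw [hmarg i]
    have e3 : (P (A j)).toReal = (P (A (k : ℤ))).toReal := by rw [hmarg j, hmarg (k : ℤ)]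
    rw [e1, e2, e3]
    exact le_trans (le_abs_self _) (le_min (hcov_alpha k) (hcov_H k))
  have hcov : ∀ i j : ℤ,
      (P (A i ∩ A j)).toReal - (P (A i)).toReal * (P (A j)).toReal
        ≤ min (alphaMix P X (j - i).natAbs) H := by
    intro i j
    rcases le_total i j with h | h
    · exact hkey i j h
    · have := hkey j i h
      have hne : (j - i).natAbs = (i - j).natAbs := by omega
      rw [Set.inter_comm, mul_comm, ← hne] at this
      exact this
  -- variance expansion
  set S : Ω → ℝ := fun ω => ∑ i ∈ I, (A i).indicator 1 ω with hSdef
  have hSstmt : (fun ω => ∑ i ∈ Finset.Icc (1 : ℤ) q,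
      (if trunc M (X i ω) ≤ t then (1 : ℝ) else 0)) = S := by
    funext ω
    simp [hSdef, Set.indicator_apply, hAdef, Set.mem_setOf_eq, hIdef]
  have hSmeas : Measurable S :=
    Finset.measurable_sum I fun i _ => measurable_one.indicator (hAmeas i)
  have hbound : ∀ ω, ‖S ω‖ ≤ (q : ℝ) := by
    intro ω
    have h0 : 0 ≤ S ω := Finset.sum_nonneg fun i _ =>
      Set.indicator_nonneg (fun _ _ => zero_le_one) ω
    have h1 : S ω ≤ (I.card : ℝ) := by
      calc S ω ≤ ∑ _i ∈ I, (1 : ℝ) := Finset.sum_le_sum fun i _ => by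
            simp [Set.indicator_apply]; split <;> norm_num
        _ = (I.card : ℝ) := by simp
    have hcard : I.card = q := by
      rw [hIdef, Int.card_Icc]; omega
    rw [Real.norm_eq_abs, abs_of_nonneg h0]
    rw [hcard] at h1
    exact h1
  have hS2 : MemLp S 2 P :=
    MemLp.of_bound hSmeas.aestronglyMeasurable (q : ℝ) (Filter.Eventually.of_forall hbound)
  have hES : ∫ ω, S ω ∂P = ∑ i ∈ I, (P (A i)).toReal := by
    rw [hSdef, integral_finset_sum I fun i _ => hint (A i) (hAmeas i)]
    exact Finset.sum_congr rfl fun i _ => integral_indicator_one (hAmeas i)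
  have hES2 : ∫ ω, (S ^ 2) ω ∂P = ∑ i ∈ I, ∑ j ∈ I, (P (A i ∩ A j)).toReal := by
    have hsq : (S ^ 2) = fun ω => ∑ i ∈ I, ∑ j ∈ I, (A i ∩ A j).indicator 1 ω := by
      funext ω
      rw [Pi.pow_apply, sq, hSdef, Finset.sum_mul_sum]
      refine Finset.sum_congr rfl fun i _ => Finset.sum_congr rfl fun j _ => ?_
      rw [Set.inter_indicator_one, Pi.mul_apply]
    rw [hsq]
    rw [integral_finset_sum I fun i _ => integrable_finset_sum I fun j _ =>
      hint _ ((hAmeas i).inter (hAmeas j))]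
    refine Finset.sum_congr rfl fun i _ => ?_
    rw [integral_finset_sum I fun j _ => hint _ ((hAmeas i).inter (hAmeas j))]
    exact Finset.sum_congr rfl fun j _ => integral_indicator_one ((hAmeas i).inter (hAmeas j))
  have hvar : ProbabilityTheory.variance S P
      = ∑ i ∈ I, ∑ j ∈ I,
        ((P (A i ∩ A j)).toReal - (P (A i)).toReal * (P (A j)).toReal) := by
    rw [ProbabilityTheory.variance_eq_sub hS2]
    have : (∫ ω, S ω ∂P) ^ 2 = ∑ i ∈ I, ∑ j ∈ I, (P (A i)).toReal * (P (A j)).toReal := by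
      rw [hES, sq, Finset.sum_mul_sum]
    rw [hES2, this, ← Finset.sum_sub_distrib]
    exact Finset.sum_congr rfl fun i _ => (Finset.sum_sub_distrib _ _).symm
  -- counting bound
  set c : ℕ → ℝ := fun k => min (alphaMix P X k) H with hcdef
  have hcnn : ∀ k, 0 ≤ c k := fun k => le_min (halpha_nonneg k) hHnn
  have hcnt : ∀ i ∈ I, (∑ j ∈ I, c (j - i).natAbs) ≤ 2 * ∑ k ∈ Finset.range q, c k := by
    intro i hi
    have hi' := Finset.mem_Icc.mp hi
    have hpartbd : ∀ s : Finset ℤ, s ⊆ I →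
        (∀ j ∈ s, ∀ j' ∈ s, (j - i).natAbs = (j' - i).natAbs → j = j') →
        ∑ j ∈ s, c (j - i).natAbs ≤ ∑ k ∈ Finset.range q, c k := by
      intro s hsub hinj
      rw [← Finset.sum_image hinj]
      refine Finset.sum_le_sum_of_subset_of_nonneg ?_ fun k _ _ => hcnn k
      intro k hk
      rw [Finset.mem_image] at hk
      obtain ⟨j, hjs, rfl⟩ := hk
      have hj' := Finset.mem_Icc.mp (hsub hjs)
      rw [Finset.mem_range]
      omega
    have hsplit := Finset.sum_filter_add_sum_filter_not I (fun j => j ≤ i)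
      (fun j => c (j - i).natAbs)
    have h1 : ∑ j ∈ I.filter (fun j => j ≤ i), c (j - i).natAbs
        ≤ ∑ k ∈ Finset.range q, c k := by
      refine hpartbd _ (Finset.filter_subset _ _) ?_
      intro j hj j' hj' hjj
      have := (Finset.mem_filter.mp hj).2
      have := (Finset.mem_filter.mp hj').2
      omega
    have h2 : ∑ j ∈ I.filter (fun j => ¬ j ≤ i), c (j - i).natAbs
        ≤ ∑ k ∈ Finset.range q, c k := by
      refine hpartbd _ (Finset.filter_subset _ _) ?_
      intro j hj j' hj' hjj
      have := (Finset.mem_filter.mp hj).2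
      have := (Finset.mem_filter.mp hj').2
      omega
    calc (∑ j ∈ I, c (j - i).natAbs)
        = ∑ j ∈ I.filter (fun j => j ≤ i), c (j - i).natAbs
          + ∑ j ∈ I.filter (fun j => ¬ j ≤ i), c (j - i).natAbs := hsplit.symm
      _ ≤ 2 * ∑ k ∈ Finset.range q, c k := by linarith
  have hsum_nn : 0 ≤ ∑ k ∈ Finset.range q, c k :=
    Finset.sum_nonneg fun k _ => hcnn k
  have hcard : I.card = q := by rw [hIdef, Int.card_Icc]; omega
  rw [hSstmt, hvar]
  calc ∑ i ∈ I, ∑ j ∈ I, ((P (A i ∩ A j)).toReal - (P (A i)).toReal * (P (A j)).toReal)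
      ≤ ∑ i ∈ I, ∑ j ∈ I, c (j - i).natAbs :=
        Finset.sum_le_sum fun i _ => Finset.sum_le_sum fun j _ => hcov i j
    _ ≤ ∑ _i ∈ I, 2 * ∑ k ∈ Finset.range q, c k :=
        Finset.sum_le_sum fun i hi => hcnt i hi
    _ = (q : ℝ) * (2 * ∑ k ∈ Finset.range q, c k) := by
        rw [Finset.sum_const, hcard, nsmul_eq_mul]
    _ ≤ 8 * q * ∑ k ∈ Finset.range q, c k := by nlinarith [hsum_nn, (Nat.one_le_cast (α := ℝ)).mpr hq]
end

section
/- Let H be the tail function of an integrable nonnegative random variable with inverse Q, let α be a nonincreasing mixing-coefficient sequence with counting inverse α^{-1}, and set R(u) = α^{-1}(u)·Q(u). Then for any v ∈ (0,1], p > 2 and q = α^{-1}(v) ∧ n: ∫_0^{Q(v)} ( ∑_{k=0}^{q−1} min(α(k), H(t)) )^{1/p} dt ≤ (v q)^{1/p} Q(v) + (∫_0^1 R(u) Q(u) du)^{1/p} · (p/(p−2)) · Q(v)^{1−2/p}. -/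
open MeasureTheory ENNReal
open scoped NNReal

/-- The counting inverse `α⁻¹(u) = #{k ≥ 0 : α(k) > u}`. -/
noncomputable def alphaInv (α : ℕ → ℝ) (u : ℝ) : ℝ≥0∞ :=
  ∑' k, if u < α k then 1 else 0

lemma myRpowAdd (a b : ℝ) (ha : 0 ≤ a) (hb : 0 ≤ b) {z : ℝ} (hz0 : 0 ≤ z) (hz1 : z ≤ 1) :
    (a + b) ^ z ≤ a ^ z + b ^ z := by
  have h := NNReal.rpow_add_le_add_rpow a.toNNReal b.toNNReal hz0 hz1
  have hc : ((a.toNNReal + b.toNNReal : ℝ≥0) : ℝ) = a + b := by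
    rw [NNReal.coe_add, Real.coe_toNNReal _ ha, Real.coe_toNNReal _ hb]
  calc (a + b) ^ z = (((a.toNNReal + b.toNNReal : ℝ≥0) : ℝ)) ^ z := by rw [hc]
    _ = (((a.toNNReal + b.toNNReal) ^ z : ℝ≥0) : ℝ) := by rw [NNReal.coe_rpow]
    _ ≤ ((a.toNNReal ^ z + b.toNNReal ^ z : ℝ≥0) : ℝ) := by exact_mod_cast h
    _ = a ^ z + b ^ z := by
        rw [NNReal.coe_add, NNReal.coe_rpow, NNReal.coe_rpow,
          Real.coe_toNNReal _ ha, Real.coe_toNNReal _ hb]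

/-- The key integral bound:
`∫_0^{Q(v)} (∑_{k=0}^{q-1} min(α(k), H(t)))^{1/p} dt
  ≤ (v q)^{1/p} Q(v) + (∫_0^1 R(u) Q(u) du)^{1/p} (p/(p-2)) Q(v)^{1-2/p}`
with `q = α⁻¹(v) ∧ n` and `R(u) = α⁻¹(u) Q(u)`. -/
theorem integral_rpow_sum_min_le (α : ℕ → ℝ) (hαmono : Antitone α)
    (hαr : ∀ k, α k ∈ Set.Icc (0 : ℝ) 1)
    (hαfin : ∀ u > (0 : ℝ), alphaInv α u < ⊤)
    (H Q : ℝ → ℝ)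
    (hHmono : AntitoneOn H (Set.Ici 0))
    (hHr : ∀ t ≥ (0 : ℝ), H t ∈ Set.Icc (0 : ℝ) 1)
    (hHrc : ∀ t ≥ (0 : ℝ), ContinuousWithinAt H (Set.Ici t) t)
    (hHlim : Filter.Tendsto H Filter.atTop (nhds 0))
    (hQ : ∀ u, Q u = sInf {t | 0 ≤ t ∧ H t ≤ u})
    (R : ℝ → ℝ) (hR : ∀ u, R u = (alphaInv α u).toReal * Q u)
    (hRint : IntegrableOn (fun u => R u * Q u) (Set.Ioc 0 1))
    (v : ℝ) (hv : v ∈ Set.Ioc (0 : ℝ) 1) (n : ℕ) (hn : 1 ≤ n)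
    (p : ℝ) (hp : 2 < p)
    (q : ℕ) (hqdef : (q : ℝ≥0∞) = min (alphaInv α v) (n : ℝ≥0∞)) :
    ∫ t in Set.Ioc 0 (Q v), (∑ k ∈ Finset.range q, min (α k) (H t)) ^ (1 / p)
      ≤ (v * q) ^ (1 / p) * Q v
        + (∫ u in Set.Ioc (0 : ℝ) 1, R u * Q u) ^ (1 / p) * (p / (p - 2))
            * Q v ^ (1 - 2 / p) := by
  have hp0 : (0:ℝ) < p := by linarith
  have hp1 : 0 < 1/p := by positivity
  have hp1' : 1/p ≤ 1 := by rw [div_le_one hp0]; linarith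
  obtain ⟨hv0, hv1⟩ := hv
  have hQ0 : ∀ u, 0 ≤ Q u := fun u => by
    rw [hQ u]; exact Real.sInf_nonneg (fun t ht => ht.1)
  have hRQ0 : ∀ u, 0 ≤ R u * Q u := fun u => by
    rw [hR u]
    exact mul_nonneg (mul_nonneg ENNReal.toReal_nonneg (hQ0 u)) (hQ0 u)
  set A := ∫ u in Set.Ioc (0:ℝ) 1, R u * Q u with hA
  have hA0 : 0 ≤ A := setIntegral_nonneg measurableSet_Ioc (fun u _ => hRQ0 u)
  have hQlb : ∀ t u, 0 < t → 0 < u → u < H t → t ≤ Q u := by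
    intro t u ht hu hut
    rw [hQ u]
    have hne : {s | 0 ≤ s ∧ H s ≤ u}.Nonempty := by
      rcases ((hHlim.eventually_lt_const hu).and
        (Filter.eventually_ge_atTop (0:ℝ))).exists with ⟨s, hs1, hs2⟩
      exact ⟨s, hs2, hs1.le⟩
    refine le_csInf hne ?_
    intro s hs
    by_contra h
    push_neg at h
    have := hHmono (Set.mem_Ici.mpr hs.1) (Set.mem_Ici.mpr ht.le) h.le
    linarith [hs.2]
  have hsumInv : ∀ u : ℝ, 0 < u →
      (∑ k ∈ Finset.range q, if u < α k then (1:ℝ) else 0) ≤ (alphaInv α u).toReal := by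
    intro u hu
    have h1 : (∑ k ∈ Finset.range q, if u < α k then (1:ℝ≥0∞) else 0) ≤ alphaInv α u :=
      ENNReal.sum_le_tsum _
    have h2 := ENNReal.toReal_mono (hαfin u hu).ne h1
    calc (∑ k ∈ Finset.range q, if u < α k then (1:ℝ) else 0)
        = (∑ k ∈ Finset.range q, if u < α k then (1:ℝ≥0∞) else 0).toReal := by
          rw [ENNReal.toReal_sum (fun k _ => by split <;> simp)]
          simp [apply_ite ENNReal.toReal]
      _ ≤ _ := h2
  -- key pointwise bound
  have key : ∀ t ∈ Set.Ioc (0:ℝ) (Q v),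
      (∑ k ∈ Finset.range q, min (α k) (H t)) ≤ v * q + (t ^ (-2:ℝ)) * A := by
    intro t ht
    obtain ⟨ht0, htQ⟩ := ht
    set f : ℕ → ℝ → ℝ := fun k u => if u < min (α k) (H t) then (1:ℝ) else 0 with hf
    have hfin : (volume (Set.Ioc v (1:ℝ))) < ⊤ := by
      rw [Real.volume_Ioc]; exact ENNReal.ofReal_lt_top
    have hfind : ∀ k, f k
        = (Set.Iio (min (α k) (H t))).indicator (fun _ => (1:ℝ)) := by
      intro k; funext u; simp [hf, Set.indicator_apply]
    have hfint : ∀ k, IntegrableOn (f k) (Set.Ioc v 1) := by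
      intro k
      rw [hfind k]
      exact ((integrableOn_const_iff (C := (1:ℝ))).mpr (Or.inr hfin)).indicator measurableSet_Iio
    -- step A : per-k bound
    have stepA : ∀ k, min (α k) (H t) ≤ v + ∫ u in Set.Ioc v 1, f k u := by
      intro k
      have hxk1 : min (α k) (H t) ≤ 1 := le_trans (min_le_left _ _) (hαr k).2
      have hval : ∫ u in Set.Ioc v 1, f k u = max (min (α k) (H t) - v) 0 := by
        rw [hfind k, setIntegral_indicator measurableSet_Iio, setIntegral_const]
        have hset : Set.Ioc v 1 ∩ Set.Iio (min (α k) (H t))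
            = Set.Ioo v (min (α k) (H t)) := by
          ext u
          simp only [Set.mem_inter_iff, Set.mem_Ioc, Set.mem_Iio, Set.mem_Ioo]
          exact ⟨fun h => ⟨h.1.1, h.2⟩, fun h => ⟨⟨h.1, le_trans h.2.le hxk1⟩, h.2⟩⟩
        rw [hset, Real.volume_real_Ioo, smul_eq_mul, mul_one]
      rw [hval]
      have := le_max_left (min (α k) (H t) - v) 0
      linarith
    -- sum it
    calc (∑ k ∈ Finset.range q, min (α k) (H t))
        ≤ ∑ k ∈ Finset.range q, (v + ∫ u in Set.Ioc v 1, f k u) :=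
          Finset.sum_le_sum (fun k _ => stepA k)
      _ = v * q + ∑ k ∈ Finset.range q, ∫ u in Set.Ioc v 1, f k u := by
          rw [Finset.sum_add_distrib, Finset.sum_const, Finset.card_range,
            nsmul_eq_mul, mul_comm]
      _ = v * q + ∫ u in Set.Ioc v 1, ∑ k ∈ Finset.range q, f k u := by
          rw [integral_finset_sum _ (fun k _ => hfint k)]
      _ ≤ v * q + ∫ u in Set.Ioc v 1, (t ^ (-2:ℝ)) * (R u * Q u) := by
          refine add_le_add le_rfl ?_
          refine integral_mono_of_nonneg ?_ ?_ ?_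
          · exact ae_of_all _ fun u => Finset.sum_nonneg fun k _ => by
              simp only [hf]; split <;> norm_num
          · exact ((hRint.mono_set (Set.Ioc_subset_Ioc_left hv0.le)).const_mul _)
          · refine (ae_restrict_iff' measurableSet_Ioc).mpr (ae_of_all _ ?_)
            intro u hu
            have hu0 : 0 < u := hv0.trans hu.1
            have htneg : (0:ℝ) ≤ t ^ (-2:ℝ) := Real.rpow_nonneg ht0.le _
            by_cases hcase : u < H t
            · have hfk : ∀ k, f k u = if u < α k then (1:ℝ) else 0 := by
                intro k
                simp only [hf, lt_min_iff]
                by_cases h1 : u < α k <;> simp [h1, hcase]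
              have h2 : 1 ≤ t ^ (-2:ℝ) * (Q u * Q u) := by
                have htQu : t ≤ Q u := hQlb t u ht0 hu0 hcase
                have hmul : t * t ≤ Q u * Q u :=
                  mul_le_mul htQu htQu ht0.le (hQ0 u)
                have htt : t ^ (-2:ℝ) = (t * t)⁻¹ := by
                  rw [show (-2:ℝ) = -(2:ℕ) by norm_num, Real.rpow_neg ht0.le,
                    Real.rpow_natCast]
                  norm_num [sq]
                rw [htt, inv_mul_eq_div, le_div_iff₀ (by positivity : (0:ℝ) < t * t)]
                nlinarith
              calc (∑ k ∈ Finset.range q, f k u)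
                  = ∑ k ∈ Finset.range q, if u < α k then (1:ℝ) else 0 := by
                    exact Finset.sum_congr rfl fun k _ => hfk k
                _ ≤ (alphaInv α u).toReal := hsumInv u hu0
                _ ≤ (alphaInv α u).toReal * (t ^ (-2:ℝ) * (Q u * Q u)) :=
                    le_mul_of_one_le_right ENNReal.toReal_nonneg h2
                _ = t ^ (-2:ℝ) * (R u * Q u) := by rw [hR u]; ring
            · have hz : ∀ k, f k u = 0 := by
                intro k; simp only [hf, lt_min_iff]
                simp [hcase]
              simp only [hz, Finset.sum_const_zero]
              exact mul_nonneg htneg (hRQ0 u)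
      _ ≤ v * q + (t ^ (-2:ℝ)) * A := by
          rw [MeasureTheory.integral_const_mul]
          have hIA : (∫ u in Set.Ioc v 1, R u * Q u) ≤ A := by
            refine setIntegral_mono_set hRint (ae_of_all _ hRQ0) ?_
            exact HasSubset.Subset.eventuallyLE (Set.Ioc_subset_Ioc_left hv0.le)
          have := mul_le_mul_of_nonneg_left hIA (Real.rpow_nonneg ht0.le (-2:ℝ))
          linarith
  -- final assembly
  have hQv0 : 0 ≤ Q v := hQ0 v
  have h2p1 : 2/p < 1 := by rw [div_lt_one hp0]; linarith
  have hr1 : (-1:ℝ) < -(2/p) := by linarith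
  have hint : IntegrableOn (fun t : ℝ => t ^ (-(2/p))) (Set.Ioc 0 (Q v)) :=
    (intervalIntegral.intervalIntegrable_rpow' hr1).1
  have hcint : IntegrableOn (fun _ : ℝ => (v*q)^(1/p)) (Set.Ioc 0 (Q v)) := by
    refine (integrableOn_const_iff (C := (v*q)^(1/p))).mpr (Or.inr ?_)
    rw [Real.volume_Ioc]; exact ENNReal.ofReal_lt_top
  have hvq0 : 0 ≤ v * q := mul_nonneg hv0.le (Nat.cast_nonneg q)
  have hmono : ∫ t in Set.Ioc 0 (Q v), (∑ k ∈ Finset.range q, min (α k) (H t)) ^ (1/p)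
      ≤ ∫ t in Set.Ioc 0 (Q v), ((v*q)^(1/p) + A^(1/p) * t^(-(2/p))) := by
    refine integral_mono_of_nonneg ?_ (hcint.add (hint.const_mul _)) ?_
    · refine (ae_restrict_iff' measurableSet_Ioc).mpr (ae_of_all _ fun t ht => ?_)
      exact Real.rpow_nonneg
        (Finset.sum_nonneg fun k _ => le_min (hαr k).1 (hHr t ht.1.le).1) _
    · refine (ae_restrict_iff' measurableSet_Ioc).mpr (ae_of_all _ fun t ht => ?_)
      have ht0 := ht.1
      have hS0 : 0 ≤ ∑ k ∈ Finset.range q, min (α k) (H t) :=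
        Finset.sum_nonneg fun k _ => le_min (hαr k).1 (hHr t ht0.le).1
      calc (∑ k ∈ Finset.range q, min (α k) (H t)) ^ (1/p)
          ≤ (v*q + t^(-2:ℝ)*A)^(1/p) := Real.rpow_le_rpow hS0 (key t ht) hp1.le
        _ ≤ (v*q)^(1/p) + (t^(-2:ℝ)*A)^(1/p) :=
            myRpowAdd _ _ hvq0 (mul_nonneg (Real.rpow_nonneg ht0.le _) hA0) hp1.le hp1'
        _ = (v*q)^(1/p) + A^(1/p) * t^(-(2/p)) := by
            rw [Real.mul_rpow (Real.rpow_nonneg ht0.le _) hA0]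
            have hres : (t ^ (-2:ℝ)) ^ (1/p) = t ^ (-(2/p)) := by
              rw [← Real.rpow_mul ht0.le]
              congr 1
              ring
            rw [hres, mul_comm (t ^ (-(2/p)))]
  refine hmono.trans ?_
  rw [integral_add hcint (hint.const_mul _)]
  have h1 : ∫ _ in Set.Ioc 0 (Q v), (v*q)^(1/p) = (v*q)^(1/p) * Q v := by
    rw [setIntegral_const, Real.volume_real_Ioc_of_le hQv0, smul_eq_mul,
      sub_zero, mul_comm]
  have h2 : ∫ t in Set.Ioc 0 (Q v), A^(1/p) * t^(-(2/p))
      = A^(1/p) * ((p/(p-2)) * Q v ^ (1-2/p)) := by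
    rw [MeasureTheory.integral_const_mul]
    congr 1
    rw [← intervalIntegral.integral_of_le hQv0, integral_rpow (Or.inl hr1),
      Real.zero_rpow (by linarith : -(2/p) + 1 ≠ 0), sub_zero,
      show -(2/p) + 1 = 1 - 2/p from by ring]
    rw [div_eq_mul_inv, show ((1:ℝ)-2/p)⁻¹ = p/(p-2) from ?_, mul_comm]
    rw [show (1:ℝ)-2/p = (p-2)/p from by field_simp, inv_div]
  rw [h1, h2]
  exact le_of_eq (by ring)
end

section
/- Let (a_n) be defined by a_n = (1/√(n log log n)) · ∫_0^{r_n} g(u) du where g : (0,1] → [0,∞) is measurable, r_n = R^{-1}(m_n) with m_n = a√(n/ log log n) for some a > 0, and R : (0,1] → [0,∞) is nonincreasing with generalized inverse R^{-1}(x) = inf{u ∈ [0,1] : R(u) ≤ x}. If ∫_0^1 R(u) g(u) du < ∞, then ∑_{n≥2} a_n < ∞. -/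
open MeasureTheory
open Finset

namespace SumQuantAux

noncomputable def LL (k : ℕ) : ℝ := Real.log (Real.log (k : ℝ))
noncomputable def MM (a : ℝ) (k : ℕ) : ℝ := a * Real.sqrt ((k : ℝ) / Real.log (Real.log (k : ℝ)))
noncomputable def cc (k : ℕ) : ℝ := 1 / Real.sqrt ((k : ℝ) * Real.log (Real.log (k : ℝ)))

lemma log_ge_of_16 {k : ℕ} (hk : 16 ≤ k) : 2.772 ≤ Real.log (k:ℝ) := by
  have h2 : (16:ℝ) ≤ (k:ℝ) := by exact_mod_cast hk
  have h : Real.log 16 ≤ Real.log (k:ℝ) := Real.log_le_log (by norm_num) h2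
  have h16 : Real.log 16 = 4 * Real.log 2 := by
    rw [show (16:ℝ) = 2^(4:ℕ) by norm_num, Real.log_pow]; push_cast; ring
  have := Real.log_two_gt_d9
  rw [h16] at h; linarith

lemma LL_ge_one {k : ℕ} (hk : 16 ≤ k) : 1 ≤ LL k := by
  have h := log_ge_of_16 hk
  have hpos : (0:ℝ) < Real.log (k:ℝ) := by linarith
  rw [LL]
  rw [Real.le_log_iff_exp_le hpos]
  have := Real.exp_one_lt_d9
  linarith

lemma LL_pos {k : ℕ} (hk : 3 ≤ k) : 0 < LL k := by
  have h2 : (3:ℝ) ≤ (k:ℝ) := by exact_mod_cast hk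
  have hpos : (0:ℝ) < (k:ℝ) := by linarith
  have h1 : 1 < Real.log (k:ℝ) := by
    rw [Real.lt_log_iff_exp_lt hpos]
    have := Real.exp_one_lt_d9
    linarith
  exact Real.log_pos h1

lemma logk_pos {k : ℕ} (hk : 3 ≤ k) : 0 < Real.log (k:ℝ) := by
  have h2 : (3:ℝ) ≤ (k:ℝ) := by exact_mod_cast hk
  exact Real.log_pos (by linarith)

lemma MM_nonneg {a : ℝ} (ha : 0 ≤ a) (k : ℕ) : 0 ≤ MM a k := by
  rw [MM]; positivity

lemma MM_pos {a : ℝ} (ha : 0 < a) {k : ℕ} (hk : 3 ≤ k) : 0 < MM a k := by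
  have hL := LL_pos hk
  rw [LL] at hL
  have hk0 : (0:ℝ) < (k:ℝ) := by positivity
  rw [MM]
  have : 0 < (k:ℝ) / Real.log (Real.log (k:ℝ)) := div_pos hk0 hL
  positivity

lemma cc_nonneg (k : ℕ) : 0 ≤ cc k := by rw [cc]; positivity

lemma cc_two : cc 2 = 0 := by
  have h1 : Real.log (Real.log (2:ℝ)) < 0 :=
    Real.log_neg (Real.log_pos (by norm_num)) (by
      have := Real.log_two_lt_d9; linarith)
  rw [cc]
  have : ((2:ℕ):ℝ) * Real.log (Real.log ((2:ℕ):ℝ)) ≤ 0 := by push_cast; nlinarith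
  rw [Real.sqrt_eq_zero'.2 this, div_zero]

lemma cc_eq (a : ℝ) (ha : 0 < a) {k : ℕ} (hk : 3 ≤ k) : cc k = MM a k / (a * k) := by
  have hL := LL_pos hk
  rw [LL] at hL
  have hk0 : (0:ℝ) < (k:ℝ) := by positivity
  rw [cc, MM]
  rw [Real.sqrt_div hk0.le, Real.sqrt_mul hk0.le]
  have hsk : (0:ℝ) < Real.sqrt (k:ℝ) := Real.sqrt_pos.2 hk0
  have hsL : (0:ℝ) < Real.sqrt (Real.log (Real.log (k:ℝ))) := Real.sqrt_pos.2 hL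
  have hmul : Real.sqrt (k:ℝ) * Real.sqrt (k:ℝ) = (k:ℝ) := Real.mul_self_sqrt hk0.le
  field_simp
  linear_combination -hmul

lemma LL_succ_le {k : ℕ} (hk : 16 ≤ k) : LL (k+1) ≤ LL k * (1 + 1/(2*(k:ℝ))) := by
  have hk16 : (16:ℝ) ≤ (k:ℝ) := by exact_mod_cast hk
  have hkpos : (0:ℝ) < (k:ℝ) := by linarith
  have hlogk : 2.772 ≤ Real.log (k:ℝ) := log_ge_of_16 hk
  have hlogpos : 0 < Real.log (k:ℝ) := by linarith
  have hLL1 : 1 ≤ LL k := LL_ge_one hk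
  have hmono : Real.log (k:ℝ) ≤ Real.log ((k:ℝ)+1) := Real.log_le_log hkpos (by linarith)
  -- step1 : log (k+1) - log k ≤ 1/k
  have step1 : Real.log ((k:ℝ)+1) - Real.log (k:ℝ) ≤ 1/(k:ℝ) := by
    have h1 : Real.log ((k:ℝ)+1) - Real.log (k:ℝ) = Real.log (((k:ℝ)+1)/(k:ℝ)) := by
      rw [Real.log_div (by linarith) (by linarith)]
    have h2 : Real.log (((k:ℝ)+1)/(k:ℝ)) ≤ ((k:ℝ)+1)/(k:ℝ) - 1 :=
      Real.log_le_sub_one_of_pos (by positivity)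
    have h3 : ((k:ℝ)+1)/(k:ℝ) - 1 = 1/(k:ℝ) := by field_simp; ring
    linarith
  -- step2 : LL(k+1) - LL k ≤ (log(k+1) - log k)/log k
  have step2 : LL (k+1) - LL k ≤ (Real.log ((k:ℝ)+1) - Real.log (k:ℝ)) / Real.log (k:ℝ) := by
    have hcast : ((k+1:ℕ):ℝ) = (k:ℝ)+1 := by push_cast; ring
    have h1 : LL (k+1) - LL k = Real.log (Real.log ((k:ℝ)+1) / Real.log (k:ℝ)) := by
      rw [LL, LL, hcast, Real.log_div (by linarith) (by linarith)]
    have h2 : Real.log (Real.log ((k:ℝ)+1) / Real.log (k:ℝ))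
        ≤ Real.log ((k:ℝ)+1) / Real.log (k:ℝ) - 1 :=
      Real.log_le_sub_one_of_pos (div_pos (by linarith) hlogpos)
    have h3 : Real.log ((k:ℝ)+1) / Real.log (k:ℝ) - 1
        = (Real.log ((k:ℝ)+1) - Real.log (k:ℝ)) / Real.log (k:ℝ) := by field_simp
    linarith
  have step3 : (1/(k:ℝ)) / Real.log (k:ℝ) ≤ LL k / (2*(k:ℝ)) := by
    rw [div_le_div_iff₀ (by positivity) (by positivity)]
    have key : 2 ≤ Real.log (k:ℝ) * LL k := by nlinarith
    have h1k : (1:ℝ)/(k:ℝ) * (2*(k:ℝ)) = 2 := by field_simp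
    nlinarith
  have step4 : (Real.log ((k:ℝ)+1) - Real.log (k:ℝ)) / Real.log (k:ℝ) ≤ (1/(k:ℝ)) / Real.log (k:ℝ) := by
    gcongr
  have expand : LL k * (1 + 1/(2*(k:ℝ))) = LL k + LL k/(2*(k:ℝ)) := by
    field_simp
  linarith
lemma MM_sqrt_eq (a : ℝ) (k : ℕ) : MM a k = a * Real.sqrt ((k:ℝ) / LL k) := rfl

lemma MM_step (a : ℝ) (ha : 0 < a) {n : ℕ} (hn : 15 ≤ n) :
    MM a (n+1) ≤ MM a (n+2) * (1 - 1/(4*((n:ℝ)+2))) := by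
  have h16 : 16 ≤ n + 1 := by omega
  have hL1 : 0 < LL (n+1) := LL_pos (by omega)
  have hL2 : 0 < LL (n+2) := LL_pos (by omega)
  have hLs : LL (n+2) ≤ LL (n+1) * (1 + 1/(2*((n:ℝ)+1))) := by
    have := LL_succ_le h16
    have hc : ((n+1:ℕ):ℝ) = (n:ℝ)+1 := by push_cast; ring
    rw [show n+1+1 = n+2 by ring] at this
    rwa [hc] at this
  set s : ℝ := (n:ℝ)+1 with hs
  have hspos : 0 < s := by positivity
  set L1 := LL (n+1) with hL1d
  set L2 := LL (n+2) with hL2d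
  -- claim1 : s / L1 ≤ (s + 1/2) / L2
  have claim1 : s / L1 ≤ (s + 1/2) / L2 := by
    rw [div_le_div_iff₀ hL1 hL2]
    have : s * (L1 * (1 + 1/(2*s))) = (s + 1/2) * L1 := by field_simp
    nlinarith
  set eps : ℝ := 1/(4*(s+1)) with heps
  have heps_pos : 0 < eps := by positivity
  have heps_le : eps ≤ 1 := by
    rw [heps]
    rw [div_le_one (by positivity)]
    linarith
  clear_value s L1 L2 eps
  have claim2 : (s + 1/2) / L2 ≤ ((s+1)/L2) * (1 - eps)^2 := by
    have expand : ((s+1)/L2) * (1 - eps)^2 = ((s+1) * (1-eps)^2) / L2 := by ring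
    rw [expand, div_le_div_iff₀ hL2 hL2]
    have key : (s+1) * (1-eps)^2 = s + 1/2 + (s+1)*eps^2 := by
      rw [heps]; field_simp; ring
    have key2 : (s + 1) * (1 - eps) ^ 2 * L2 = (s + 1/2) * L2 + (s+1) * eps^2 * L2 := by
      linear_combination L2 * key
    have hnn : 0 ≤ (s+1) * eps^2 * L2 := by positivity
    linarith
  have hchain : s / L1 ≤ ((s+1)/L2) * (1 - eps)^2 := le_trans claim1 claim2
  have hsqrt : Real.sqrt (s / L1) ≤ Real.sqrt ((s+1)/L2) * (1 - eps) := by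
    have h1 : Real.sqrt (s / L1) ≤ Real.sqrt (((s+1)/L2) * (1 - eps)^2) :=
      Real.sqrt_le_sqrt hchain
    rwa [Real.sqrt_mul (by positivity), Real.sqrt_sq (by linarith)] at h1
  have hc1 : ((n+1:ℕ):ℝ) = s := by rw [hs]; push_cast; ring
  have hc2 : ((n+2:ℕ):ℝ) = s+1 := by rw [hs]; push_cast; ring
  rw [MM_sqrt_eq, MM_sqrt_eq, hc1, hc2, ← hL1d, ← hL2d]
  have : 1 - 1/(4*((n:ℝ)+2)) = 1 - eps := by rw [heps, hs]; ring
  rw [this]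
  calc a * Real.sqrt (s / L1) ≤ a * (Real.sqrt ((s+1)/L2) * (1 - eps)) := by
        exact mul_le_mul_of_nonneg_left hsqrt ha.le
    _ = a * Real.sqrt ((s+1)/L2) * (1 - eps) := by ring

lemma MM_mono_step (a : ℝ) (ha : 0 < a) {n : ℕ} (hn : 15 ≤ n) :
    MM a (n+1) ≤ MM a (n+2) := by
  have h := MM_step a ha hn
  have h2 : 0 ≤ MM a (n+2) := MM_nonneg ha.le _
  have h3 : (0:ℝ) < 1/(4*((n:ℝ)+2)) := by positivity
  nlinarith

lemma cc_step (a : ℝ) (ha : 0 < a) {n : ℕ} (hn : 15 ≤ n) :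
    cc (n+2) ≤ 4/a * (MM a (n+2) - MM a (n+1)) := by
  have h := MM_step a ha hn
  have h2 : 0 ≤ MM a (n+2) := MM_nonneg ha.le _
  rw [cc_eq a ha (by omega : 3 ≤ n+2)]
  have hc2 : ((n+2:ℕ):ℝ) = (n:ℝ)+2 := by push_cast; ring
  rw [hc2]
  have hdiff : MM a (n+2) * (1/(4*((n:ℝ)+2))) ≤ MM a (n+2) - MM a (n+1) := by nlinarith
  have heq : 4/a * (MM a (n+2) * (1/(4*((n:ℝ)+2)))) = MM a (n+2) / (a * ((n:ℝ)+2)) := by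
    field_simp
  have h4a : (0:ℝ) < 4/a := by positivity
  calc MM a (n+2) / (a * ((n:ℝ)+2)) = 4/a * (MM a (n+2) * (1/(4*((n:ℝ)+2)))) := heq.symm
    _ ≤ 4/a * (MM a (n+2) - MM a (n+1)) := by nlinarith

lemma sum_bound (a : ℝ) (ha : 0 < a) (x : ℝ) (hx : 0 ≤ x) (N : ℕ) :
    ∑ n ∈ range N, (if MM a (n+2) ≤ x then cc (n+2) else 0) ≤ 12 / a * x := by
  set F : ℕ → ℝ := fun n => min (MM a (max n 15 + 1)) x with hF
  have key : ∀ n, (if MM a (n+2) ≤ x then cc (n+2) else 0)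
      ≤ (if n ≤ 14 then x/(2*a) else 0) + 4/a * (F (n+1) - F n) := by
    intro n
    by_cases hn : n ≤ 14
    · have hFeq : F (n+1) = F n := by
        have h1 : max (n+1) 15 = 15 := max_eq_right (by omega)
        have h2 : max n 15 = 15 := max_eq_right (by omega)
        simp only [hF, h1, h2]
      rw [hFeq, if_pos hn, sub_self, mul_zero, add_zero]
      split_ifs with h
      · rcases Nat.eq_zero_or_pos n with h0 | h0
        · subst h0; rw [show 0+2 = 2 from rfl, cc_two]; positivity
        · have hk3 : 3 ≤ n + 2 := by omega
          rw [cc_eq a ha hk3]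
          have hcast : (2:ℝ) ≤ ((n+2:ℕ):ℝ) := by exact_mod_cast (by omega : 2 ≤ n+2)
          have hden : (0:ℝ) < a * ((n+2:ℕ):ℝ) := by positivity
          calc MM a (n+2) / (a * ((n+2:ℕ):ℝ)) ≤ x / (a * ((n+2:ℕ):ℝ)) := by gcongr
            _ ≤ x / (2*a) := by
                apply div_le_div_of_nonneg_left hx (by positivity)
                nlinarith
      · positivity
    · have hn15 : 15 ≤ n := by omega
      have hmax1 : max n 15 = n := max_eq_left hn15
      have hmax2 : max (n+1) 15 = n+1 := max_eq_left (by omega)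
      rw [if_neg hn]
      simp only [hF, hmax1, hmax2]
      have hmono := MM_mono_step a ha hn15
      split_ifs with h
      · have h1 : min (MM a (n+1+1)) x = MM a (n+2) := by
          rw [show n+1+1 = n+2 from rfl]; exact min_eq_left h
        have h2 : min (MM a (n+1)) x = MM a (n+1) := min_eq_left (le_trans hmono h)
        rw [h1, h2]
        have := cc_step a ha hn15
        linarith
      · have hminle : min (MM a (n+1)) x ≤ min (MM a (n+1+1)) x := by
          rw [show n+1+1 = n+2 from rfl]
          exact min_le_min hmono le_rfl
        have h4a : (0:ℝ) ≤ 4/a := by positivity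
        nlinarith
  calc ∑ n ∈ range N, (if MM a (n+2) ≤ x then cc (n+2) else 0)
      ≤ ∑ n ∈ range N, ((if n ≤ 14 then x/(2*a) else 0) + 4/a * (F (n+1) - F n)) :=
        Finset.sum_le_sum (fun n _ => key n)
    _ = (∑ n ∈ range N, (if n ≤ 14 then x/(2*a) else 0)) + 4/a * (F N - F 0) := by
        rw [Finset.sum_add_distrib, ← Finset.mul_sum, Finset.sum_range_sub]
    _ ≤ 15 * (x/(2*a)) + 4/a * x := by
        have hsum : (∑ n ∈ range N, (if n ≤ 14 then x/(2*a) else 0)) ≤ 15 * (x/(2*a)) := by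
          rw [← Finset.sum_filter, Finset.sum_const]
          have hcard : ((range N).filter (fun n => n ≤ 14)).card ≤ 15 := by
            have hsub : (range N).filter (fun n => n ≤ 14) ⊆ range 15 := by
              intro n hn
              simp only [mem_filter, mem_range] at hn ⊢
              omega
            simpa using Finset.card_le_card hsub
          have hx2a : (0:ℝ) ≤ x/(2*a) := by positivity
          rw [nsmul_eq_mul]
          apply mul_le_mul_of_nonneg_right _ hx2a
          exact_mod_cast hcard
        have hF0 : 0 ≤ F 0 := le_min (MM_nonneg ha.le _) hx
        have hFN : F N ≤ x := min_le_right _ _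
        have h4a : (0:ℝ) ≤ 4/a := by positivity
        nlinarith
    _ ≤ 12 / a * x := by
        have : 15 * (x/(2*a)) + 4/a * x = (23/2) * (x/a) := by field_simp; ring
        rw [this]
        have : 12/a * x = 12 * (x/a) := by ring
        rw [this]
        have hxa : 0 ≤ x/a := by positivity
        linarith
end SumQuantAux

open SumQuantAux Finset in
/-- Summability lemma: if `∫_0^1 R(u) g(u) du < ∞`, then
`∑_{n ≥ 2} (1/√(n log log n)) ∫_0^{r_n} g(u) du < ∞`, where
`r_n = R⁻¹(m_n)` and `m_n = a √(n / log log n)`. -/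
theorem summable_integral_quantile (g R : ℝ → ℝ) (hg : Measurable g)
    (hg0 : ∀ u ∈ Set.Ioc (0 : ℝ) 1, 0 ≤ g u)
    (hRmono : AntitoneOn R (Set.Ioc 0 1))
    (hR0 : ∀ u ∈ Set.Ioc (0 : ℝ) 1, 0 ≤ R u)
    (hint : IntegrableOn (fun u => R u * g u) (Set.Ioc 0 1))
    (a : ℝ) (ha : 0 < a) (m r : ℕ → ℝ)
    (hm : ∀ n, m n = a * Real.sqrt (n / Real.log (Real.log n)))
    (hr : ∀ n, r n = sInf {u | u ∈ Set.Icc (0 : ℝ) 1 ∧ R u ≤ m n}) :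
    Summable (fun n : ℕ =>
      (1 / Real.sqrt ((n + 2) * Real.log (Real.log (n + 2)))) *
        ∫ u in Set.Ioc 0 (r (n + 2)), g u) := by
  -- identify coefficients with cc and m with MM
  have hmM : ∀ k : ℕ, m k = MM a k := fun k => hm k
  have hcoef : ∀ n : ℕ,
      (1 / Real.sqrt (((n:ℝ) + 2) * Real.log (Real.log ((n:ℝ) + 2)))) = cc (n+2) := by
    intro n
    rw [cc]
    norm_num [Nat.cast_add]
  -- basic facts about r
  have hr_mem : ∀ k, r k ∈ Set.Icc (0:ℝ) 1 := by
    intro k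
    rw [hr k]
    rcases Set.eq_empty_or_nonempty {u | u ∈ Set.Icc (0 : ℝ) 1 ∧ R u ≤ m k} with he | hne
    · rw [he, Real.sInf_empty]; exact ⟨le_refl 0, zero_le_one⟩
    · have hbdd : BddBelow {u | u ∈ Set.Icc (0 : ℝ) 1 ∧ R u ≤ m k} :=
        ⟨0, fun v hv => hv.1.1⟩
      constructor
      · exact le_csInf hne (fun v hv => hv.1.1)
      · obtain ⟨w, hw⟩ := hne
        exact le_trans (csInf_le hbdd hw) hw.1.2
  have hkey : ∀ k u, 0 < u → u < r k → m k < R u := by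
    intro k u hu hur
    by_contra hcon
    push_neg at hcon
    have hu1 : u ≤ 1 := le_trans hur.le (hr_mem k).2
    have humem : u ∈ {v | v ∈ Set.Icc (0 : ℝ) 1 ∧ R v ≤ m k} := ⟨⟨hu.le, hu1⟩, hcon⟩
    have : r k ≤ u := by
      rw [hr k]
      exact csInf_le ⟨0, fun v hv => hv.1.1⟩ humem
    linarith
  -- integrability of g on Ioc 0 (r k) for k ≥ 3
  have hg_int : ∀ k, 3 ≤ k → IntegrableOn g (Set.Ioc 0 (r k)) := by
    intro k hk
    have hmk : 0 < m k := by rw [hmM]; exact MM_pos ha hk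
    rw [integrableOn_Ioc_iff_integrableOn_Ioo]
    have hsub : Set.Ioo (0:ℝ) (r k) ⊆ Set.Ioc 0 1 := by
      intro u hu
      exact ⟨hu.1, le_trans hu.2.le (hr_mem k).2⟩
    apply Integrable.mono' ((hint.mono_set hsub).const_mul ((m k)⁻¹))
    · exact hg.aestronglyMeasurable.restrict
    · rw [ae_restrict_iff' measurableSet_Ioo]
      filter_upwards with u hu
      have humem : u ∈ Set.Ioc (0:ℝ) 1 := hsub hu
      have hgu : 0 ≤ g u := hg0 u humem
      have hRu : m k < R u := hkey k u hu.1 hu.2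
      rw [Real.norm_eq_abs, abs_of_nonneg hgu]
      rw [inv_mul_eq_div, le_div_iff₀ hmk]
      nlinarith
  set F : ℕ → ℝ → ℝ := fun n u => cc (n+2) * (Set.Ioc (0:ℝ) (r (n+2))).indicator g u with hFdef
  have hF_int : ∀ n : ℕ, Integrable (F n) (volume.restrict (Set.Ioc (0:ℝ) 1)) := by
    intro n
    rcases Nat.eq_zero_or_pos n with h0 | h0
    · subst h0
      have : F 0 = fun _ => 0 := by
        funext u; simp [hFdef, cc_two]
      rw [this]
      exact integrable_zero _ _ _
    · have h3 : 3 ≤ n + 2 := by omega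
      have h1 : Integrable ((Set.Ioc (0:ℝ) (r (n+2))).indicator g) volume :=
        (hg_int (n+2) h3).integrable_indicator measurableSet_Ioc
      exact (h1.integrableOn).const_mul _
  have hb_eq : ∀ n : ℕ,
      (1 / Real.sqrt (((n:ℝ) + 2) * Real.log (Real.log ((n:ℝ) + 2)))) *
        ∫ u in Set.Ioc 0 (r (n + 2)), g u = ∫ u in Set.Ioc (0:ℝ) 1, F n u := by
    intro n
    rw [hcoef n]
    have h1 : ∫ u in Set.Ioc (0:ℝ) 1, F n u
        = cc (n+2) * ∫ u in Set.Ioc (0:ℝ) 1, (Set.Ioc (0:ℝ) (r (n+2))).indicator g u := by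
      simp only [hFdef]
      exact integral_const_mul _ _
    rw [h1, setIntegral_indicator measurableSet_Ioc]
    have h2 : Set.Ioc (0:ℝ) 1 ∩ Set.Ioc (0:ℝ) (r (n+2)) = Set.Ioc (0:ℝ) (r (n+2)) := by
      rw [Set.Ioc_inter_Ioc]
      simp [min_eq_right (hr_mem (n+2)).2]
    rw [h2]
  apply summable_of_sum_range_le (c := 12/a * ∫ u in Set.Ioc (0:ℝ) 1, R u * g u)
  · intro n
    apply mul_nonneg
    · rw [hcoef n]; exact cc_nonneg _
    · apply setIntegral_nonneg measurableSet_Ioc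
      intro u hu
      exact hg0 u ⟨hu.1, le_trans hu.2 (hr_mem _).2⟩
  · intro N
    have hswap : ∑ n ∈ Finset.range N,
        (1 / Real.sqrt (((n:ℝ) + 2) * Real.log (Real.log ((n:ℝ) + 2)))) *
          (∫ u in Set.Ioc 0 (r (n + 2)), g u)
        = ∫ u in Set.Ioc (0:ℝ) 1, ∑ n ∈ Finset.range N, F n u := by
      rw [integral_finset_sum (Finset.range N) (fun n _ => hF_int n)]
      exact Finset.sum_congr rfl (fun n _ => hb_eq n)
    rw [hswap]
    have hRg_int : Integrable (fun u => 12/a * (R u * g u))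
        (volume.restrict (Set.Ioc (0:ℝ) 1)) := hint.const_mul _
    have hsum_int : Integrable (fun u => ∑ n ∈ Finset.range N, F n u)
        (volume.restrict (Set.Ioc (0:ℝ) 1)) :=
      integrable_finset_sum _ (fun n _ => hF_int n)
    have hae : (fun u => ∑ n ∈ Finset.range N, F n u)
        ≤ᶠ[ae (volume.restrict (Set.Ioc (0:ℝ) 1))] (fun u => 12/a * (R u * g u)) := by
      have hnull : ∀ᵐ u ∂(volume.restrict (Set.Ioc (0:ℝ) 1)), u ∉ Set.range r := by
        apply ae_restrict_of_ae
        have h0 : volume (Set.range r) = 0 := (Set.countable_range r).measure_zero _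
        exact measure_eq_zero_iff_ae_notMem.mp h0
      have hmem : ∀ᵐ u ∂(volume.restrict (Set.Ioc (0:ℝ) 1)), u ∈ Set.Ioc (0:ℝ) 1 :=
        ae_restrict_mem measurableSet_Ioc
      filter_upwards [hnull, hmem] with u hu1 hu2
      have hx : 0 ≤ R u := hR0 u hu2
      have hgu : 0 ≤ g u := hg0 u hu2
      have hpt : ∀ n : ℕ, F n u ≤ (if MM a (n+2) ≤ R u then cc (n+2) else 0) * g u := by
        intro n
        by_cases hmem2 : u ∈ Set.Ioc (0:ℝ) (r (n+2))
        · have hlt : u < r (n+2) := lt_of_le_of_ne hmem2.2 (fun he => hu1 ⟨n+2, he.symm⟩)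
          have hmlt : m (n+2) < R u := hkey _ u hmem2.1 hlt
          rw [if_pos (by rw [← hmM]; exact hmlt.le)]
          simp only [hFdef]
          rw [Set.indicator_of_mem hmem2]
        · simp only [hFdef]
          rw [Set.indicator_of_notMem hmem2, mul_zero]
          apply mul_nonneg _ hgu
          split_ifs
          · exact cc_nonneg _
          · exact le_rfl
      calc ∑ n ∈ Finset.range N, F n u
          ≤ ∑ n ∈ Finset.range N, (if MM a (n+2) ≤ R u then cc (n+2) else 0) * g u :=
            Finset.sum_le_sum (fun n _ => hpt n)
        _ = (∑ n ∈ Finset.range N, (if MM a (n+2) ≤ R u then cc (n+2) else 0)) * g u := by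
            rw [Finset.sum_mul]
        _ ≤ (12/a * R u) * g u :=
            mul_le_mul_of_nonneg_right (sum_bound a ha (R u) hx N) hgu
        _ = 12/a * (R u * g u) := by ring
    calc ∫ u in Set.Ioc (0:ℝ) 1, ∑ n ∈ Finset.range N, F n u
        ≤ ∫ u in Set.Ioc (0:ℝ) 1, 12/a * (R u * g u) :=
          integral_mono_ae hsum_int hRg_int hae
      _ = 12/a * ∫ u in Set.Ioc (0:ℝ) 1, R u * g u := integral_const_mul _ _
end
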